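/- arXiv:0803.4114 — 9 statements merged into one kernel-verified Lean document; each statement's English description precedes it below -/
import Mathlib

section
/- The lower central series {Fₙ} of any free group F has trivial intersection: ⋂ₙ Fₙ = {e}. -/
open MonoidAlgebra Finset

namespace MagnusAux

variable {α : Type*}

abbrev R (α : Type*) := MonoidAlgebra ℤ (FreeMonoid α)

lemma ring_id1 {S : Type*} [Ring S] (x y : S) : (x - 1) * (y - 1) = x * y - x - y + 1 := by
  simp only [sub_mul, mul_sub, one_mul, mul_one]; abel

lemma ring_id2 {S : Type*} [Ring S] (x y : S) : x * y - 1 = (x - 1) * (y - 1) + (x - 1) + (y - 1) := by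
  rw [ring_id1]; abel

lemma ring_id3 {S : Type*} [Ring S] (A B A' B' : S) :
    ((A - 1) * (B - 1) - (B - 1) * (A - 1)) * (A' * B') =
      A * B * A' * B' - B * A * A' * B' := by
  rw [ring_id1, ring_id1]
  have : A * B - A - B + 1 - (B * A - B - A + 1) = A * B - B * A := by abel
  rw [this, sub_mul, mul_assoc (A*B), mul_assoc (B*A)]

/-- additive subgroup spanned by words of length at least `n` -/
noncomputable def E (α : Type*) (n : ℕ) : AddSubgroup (R α) :=
  AddSubgroup.closure {a | ∃ w : FreeMonoid α, n ≤ w.length ∧ ∃ c : ℤ, a = single w c}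

lemma E_mono {m n : ℕ} (h : m ≤ n) : E α n ≤ E α m :=
  AddSubgroup.closure_mono (fun a ⟨w, hw, c, hc⟩ => ⟨w, h.trans hw, c, hc⟩)

lemma E_zero_top (a : R α) : a ∈ E α 0 := by
  induction a using MonoidAlgebra.induction with
  | zero => exact zero_mem _
  | single_add w c f _ _ ih =>
    exact add_mem (AddSubgroup.subset_closure ⟨w, Nat.zero_le _, c, rfl⟩) ih

lemma E_mul {j k : ℕ} {a b : R α} (ha : a ∈ E α j) (hb : b ∈ E α k) :
    a * b ∈ E α (j + k) := by
  induction ha using AddSubgroup.closure_induction with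
  | mem x hx =>
    obtain ⟨w, hw, c, rfl⟩ := hx
    induction hb using AddSubgroup.closure_induction with
    | mem y hy =>
      obtain ⟨v, hv, d, rfl⟩ := hy
      rw [single_mul_single]
      exact AddSubgroup.subset_closure ⟨w * v, by simp [FreeMonoid.length_mul]; omega, c * d, rfl⟩
    | zero => simp [mul_zero]
    | add y z _ _ hy hz => rw [mul_add]; exact add_mem hy hz
    | neg y _ hy => rw [mul_neg]; exact neg_mem hy
  | zero => simp
  | add x y _ _ hx hy => rw [add_mul]; exact add_mem hx hy
  | neg x _ hx => rw [neg_mul]; exact neg_mem hx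


variable (α) (n : ℕ)

/-- the congruence identifying words of length at least `n` with zero -/
noncomputable def con : RingCon (R α) where
  r a b := a - b ∈ E α n
  iseqv := ⟨fun a => by simp [zero_mem], fun {a b} h => by simpa using neg_mem h,
    fun {a b c} h1 h2 => by simpa using add_mem h1 h2⟩
  add' {w x y z} h1 h2 := by simpa [add_sub_add_comm] using add_mem h1 h2
  mul' {w x y z} h1 h2 := by
    show w * y - x * z ∈ E α n
    have h1' : w - x ∈ E α n := h1
    have h2' : y - z ∈ E α n := h2
    have heq : w * y - x * z = w * (y - z) + (w - x) * z := by noncomm_ring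
    rw [heq]
    refine add_mem ?_ ?_
    · simpa using E_mul (E_zero_top w) h2'
    · simpa using E_mul h1' (E_zero_top z)

/-- the truncated algebra -/
abbrev Q := (con α n).Quotient

noncomputable def pi : R α →+* Q α n := (con α n).mk'

lemma pi_surjective : Function.Surjective (pi α n) := fun q => Quotient.exists_rep q

lemma pi_eq_pi_iff {a b : R α} : pi α n a = pi α n b ↔ a - b ∈ E α n := by
  constructor
  · intro h
    exact (RingCon.eq _).1 h
  · intro h
    exact (RingCon.eq _).2 h

lemma pi_eq_zero {a : R α} (h : a ∈ E α n) : pi α n a = 0 := by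
  have : pi α n a = pi α n 0 := (pi_eq_pi_iff α n).2 (by simpa using h)
  simpa using this

/-- generator as element of R -/
noncomputable def Xg (y : α) : R α := single (FreeMonoid.of y) 1

lemma length_of_pow (y : α) (k : ℕ) : (FreeMonoid.of y ^ k).length = k := by
  induction k with
  | zero => simp
  | succ k ih => rw [pow_succ]; simp [FreeMonoid.length_mul, ih]

/-- truncated geometric series polynomial -/
noncomputable def G : Polynomial ℤ := ∑ j ∈ Finset.range n, (-Polynomial.X) ^ j

open Polynomial in
lemma one_add_X_mul_G : (1 + Polynomial.X) * G n = 1 - (-Polynomial.X) ^ n := by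
  have := geom_sum_mul (-Polynomial.X : Polynomial ℤ) n
  rw [G, mul_comm]
  rw [show (1 + Polynomial.X : Polynomial ℤ) = -(-Polynomial.X - 1) by ring, mul_neg, this]
  ring


open Polynomial in
noncomputable def av (y : α) : Polynomial ℤ →ₐ[ℤ] R α := Polynomial.aeval (Xg α y)

lemma neg_X_pow_mem (y : α) : (-(Xg α y : R α)) ^ n ∈ E α n := by
  have : (-(Xg α y : R α)) = single (FreeMonoid.of y) (-1) := by
    rw [Xg, MonoidAlgebra.single_neg]
  rw [this, single_pow]
  exact AddSubgroup.subset_closure ⟨FreeMonoid.of y ^ n, by rw [length_of_pow], (-1)^n, rfl⟩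

lemma av_neg_X_pow (y : α) : av α (y := y) ((-Polynomial.X) ^ n) = (-(Xg α y : R α)) ^ n := by
  simp [av]

lemma pi_av_one_add_X_mul_G (y : α) :
    pi α n (av α (y := y) ((1 + Polynomial.X) * G n)) = 1 := by
  rw [one_add_X_mul_G]
  have : pi α n (av α (y := y) (1 - (-Polynomial.X) ^ n)) =
      pi α n (1 - (-(Xg α y : R α)) ^ n) := by
    rw [map_sub, map_one, av_neg_X_pow]
  rw [this]
  have h2 : pi α n (1 - (-(Xg α y : R α)) ^ n) = pi α n 1 := by
    rw [pi_eq_pi_iff]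
    simpa using neg_mem (neg_X_pow_mem α n y)
  rw [h2, map_one]

/-- the Magnus unit 1 + X_y -/
noncomputable def U (y : α) : (Q α n)ˣ where
  val := pi α n (av α (y := y) (1 + Polynomial.X))
  inv := pi α n (av α (y := y) (G n))
  val_inv := by rw [← map_mul, ← map_mul, pi_av_one_add_X_mul_G]
  inv_val := by rw [← map_mul, ← map_mul, mul_comm, pi_av_one_add_X_mul_G]

/-- the Magnus homomorphism -/
noncomputable def mu : FreeGroup α →* (Q α n)ˣ := FreeGroup.lift (fun y => U α n y)

/-- image of E under pi -/
noncomputable def D (m : ℕ) : AddSubgroup (Q α n) := (E α m).map (pi α n).toAddMonoidHom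

lemma D_mono {j k : ℕ} (h : j ≤ k) : D α n k ≤ D α n j :=
  AddSubgroup.map_mono (E_mono h)

lemma mem_D_zero (q : Q α n) : q ∈ D α n 0 := by
  obtain ⟨a, rfl⟩ := pi_surjective α n q
  exact ⟨a, E_zero_top a, rfl⟩

lemma D_mul {j k : ℕ} {x y : Q α n} (hx : x ∈ D α n j) (hy : y ∈ D α n k) :
    x * y ∈ D α n (j + k) := by
  obtain ⟨a, ha, rfl⟩ := hx
  obtain ⟨b, hb, rfl⟩ := hy
  exact ⟨a * b, E_mul ha hb, map_mul (pi α n) a b⟩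

lemma D_n_eq_zero {x : Q α n} (hx : x ∈ D α n n) : x = 0 := by
  obtain ⟨a, ha, rfl⟩ := hx
  exact pi_eq_zero α n ha


/-- elements whose Magnus image is 1 + (degree ≥ k) -/
noncomputable def Hsub (k : ℕ) : Subgroup (FreeGroup α) where
  carrier := {g | (↑(mu α n g) : Q α n) - 1 ∈ D α n k}
  one_mem' := by simp [mem_D_zero]
  mul_mem' := by
    intro a b ha hb
    simp only [Set.mem_setOf_eq] at ha hb ⊢
    rw [map_mul, Units.val_mul]
    have heq : (↑(mu α n a) * ↑(mu α n b) : Q α n) - 1 =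
        ((mu α n a : Q α n) - 1) * ((mu α n b : Q α n) - 1) +
        ((mu α n a : Q α n) - 1) + ((mu α n b : Q α n) - 1) := ring_id2 _ _
    rw [heq]
    exact add_mem (add_mem (D_mono α n (Nat.le_add_left k k) (D_mul α n ha hb)) ha) hb
  inv_mem' := by
    intro a ha
    simp only [Set.mem_setOf_eq] at ha ⊢
    rw [map_inv]
    have hinv : (↑(mu α n a)⁻¹ : Q α n) * ↑(mu α n a) = 1 := Units.inv_mul _
    have heq : (↑(mu α n a)⁻¹ : Q α n) - 1 =
        -((↑(mu α n a)⁻¹ : Q α n) * ((mu α n a : Q α n) - 1)) := by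
      rw [mul_sub, hinv, mul_one, neg_sub]
    rw [heq]
    exact neg_mem (by simpa using D_mul α n (mem_D_zero α n _) ha)

lemma mem_Hsub {k : ℕ} {g : FreeGroup α} :
    g ∈ Hsub α n k ↔ (↑(mu α n g) : Q α n) - 1 ∈ D α n k := Iff.rfl

lemma coe_U_sub_one (y : α) :
    (↑(U α n y) : Q α n) - 1 = pi α n (Xg α y) := by
  show pi α n (av α (y := y) (1 + Polynomial.X)) - 1 = pi α n (Xg α y)
  have h1 : av α (y := y) (1 + Polynomial.X) = 1 + Xg α y := by
    rw [map_add, map_one]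
    congr 1
    exact Polynomial.aeval_X _
  rw [h1, map_add, map_one, add_sub_cancel_left]

lemma Xg_mem_E_one (y : α) : Xg α y ∈ E α 1 :=
  AddSubgroup.subset_closure ⟨FreeMonoid.of y, by simp [Xg], 1, rfl⟩

lemma base_mem (g : FreeGroup α) : g ∈ Hsub α n 1 := by
  induction g using FreeGroup.induction_on with
  | C1 => exact one_mem _
  | of y =>
    rw [mem_Hsub]
    have h : mu α n (FreeGroup.of y) = U α n y := FreeGroup.lift_apply_of
    rw [h, coe_U_sub_one]
    exact ⟨Xg α y, Xg_mem_E_one α y, rfl⟩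
  | inv_of y hy => exact inv_mem hy
  | mul a b ha hb => exact mul_mem ha hb

lemma lcs_mem : ∀ m : ℕ, ∀ g ∈ (⊤ : Subgroup (FreeGroup α)).lowerCentralSeries m,
    (↑(mu α n g) : Q α n) - 1 ∈ D α n (m + 1) := by
  intro m
  induction m with
  | zero => intro g _; exact base_mem α n g
  | succ m ih =>
    intro g hg
    rw [Subgroup.mem_lowerCentralSeries_succ_iff] at hg
    have : g ∈ Hsub α n (m + 2) := by
      refine (Subgroup.closure_le (Hsub α n (m + 2))).2 ?_ hg
      rintro x ⟨p, hp, q, -, rfl⟩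
      rw [SetLike.mem_coe, mem_Hsub]
      rw [commutatorElement_def, map_mul, map_mul, map_mul, map_inv, map_inv, Units.val_mul, Units.val_mul,
        Units.val_mul]
      set A := (↑(mu α n p) : Q α n)
      set B := (↑(mu α n q) : Q α n)
      set A' := (↑(mu α n p)⁻¹ : Q α n)
      set B' := (↑(mu α n q)⁻¹ : Q α n)
      have hA : A * A' = 1 := Units.mul_inv _
      have hB : B * B' = 1 := Units.mul_inv _
      have e3 : B * A * A' * B' = 1 := by
        rw [mul_assoc B A A', hA, mul_one, hB]
      have key : A * B * A' * B' - 1 =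
          ((A - 1) * (B - 1) - (B - 1) * (A - 1)) * (A' * B') := by
        rw [ring_id3, e3]
      rw [key]
      have hihp : A - 1 ∈ D α n (m + 1) := ih p hp
      have hbq : B - 1 ∈ D α n 1 := base_mem α n q
      have hab := D_mul α n hihp hbq
      have hba : (B - 1) * (A - 1) ∈ D α n (m + 1 + 1) := by
        rw [show m + 1 + 1 = 1 + (m + 1) from by omega]
        exact D_mul α n hbq hihp
      have hrest : A' * B' ∈ D α n 0 := mem_D_zero α n _
      have final := D_mul α n (sub_mem hab hba) hrest
      rw [add_zero] at final
      exact final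
    exact this


/-! ### Coefficient extraction -/

noncomputable def coeffHom (w : FreeMonoid α) : R α →+ ℤ :=
  (Finsupp.applyAddHom w).comp MonoidAlgebra.coeffAddEquiv.toAddMonoidHom

lemma coeffHom_apply (w : FreeMonoid α) (a : R α) : coeffHom α w a = a.coeff w := rfl

lemma coeff_E {m : ℕ} {a : R α} (h : a ∈ E α m) {w : FreeMonoid α} (hw : w.length < m) :
    coeffHom α w a = 0 := by
  induction h using AddSubgroup.closure_induction with
  | mem x hx =>
    obtain ⟨v, hv, c, rfl⟩ := hx
    rw [coeffHom_apply]
    exact Finsupp.single_eq_of_ne' (fun hvw => by subst hvw; omega)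
  | zero => simp
  | add x y _ _ hx hy => rw [map_add, hx, hy, add_zero]
  | neg x _ hx => rw [map_neg, hx, neg_zero]

noncomputable def polyF (y : α) (K : ℕ) (c : ℕ → ℤ) : R α :=
  ∑ k ∈ Finset.range K, single (FreeMonoid.of y ^ k) (c k)

lemma toList_of_pow (y : α) (k : ℕ) :
    FreeMonoid.toList (FreeMonoid.of y ^ k) = List.replicate k y := by
  induction k with
  | zero => simp
  | succ k ih =>
    rw [pow_succ, FreeMonoid.toList_mul, ih, FreeMonoid.toList_of, List.replicate_succ']

lemma eval_polyF_mul (y : α) (K : ℕ) (c : ℕ → ℤ) (Qq : R α) (w : FreeMonoid α) :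
    (polyF α y K c * Qq).coeff w =
      ∑ k ∈ Finset.range K, (single (FreeMonoid.of y ^ k) (c k) * Qq).coeff w := by
  rw [polyF, Finset.sum_mul]
  exact map_sum (coeffHom α w) _ _

lemma no_div_of_head_ne {y x : α} {v : List α} {k : ℕ} (hk : 1 ≤ k) (hxy : x ≠ y) :
    ¬∃ d, FreeMonoid.ofList (x :: v) = FreeMonoid.of y ^ k * d := by
  rintro ⟨d, hd⟩
  obtain ⟨k', rfl⟩ : ∃ k', k = k' + 1 := ⟨k - 1, by omega⟩
  have := congrArg FreeMonoid.toList hd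
  rw [FreeMonoid.toList_ofList, FreeMonoid.toList_mul, toList_of_pow] at this
  rw [List.replicate_succ, List.cons_append] at this
  exact hxy ((List.cons.injEq ..).mp this).1

lemma no_div_of_head_tail {y : α} {v : List α} {k : ℕ} (hk : 2 ≤ k)
    (hv : ∀ z ∈ v.head?, z ≠ y) :
    ¬∃ d, FreeMonoid.ofList (y :: v) = FreeMonoid.of y ^ k * d := by
  rintro ⟨d, hd⟩
  obtain ⟨k', rfl⟩ : ∃ k', k = (k' + 1) + 1 := ⟨k - 2, by omega⟩
  have := congrArg FreeMonoid.toList hd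
  rw [FreeMonoid.toList_ofList, FreeMonoid.toList_mul, toList_of_pow] at this
  rw [List.replicate_succ, List.cons_append] at this
  have hv' : v = List.replicate (k' + 1) y ++ FreeMonoid.toList d :=
    ((List.cons.injEq ..).mp this).2
  rw [List.replicate_succ, List.cons_append] at hv'
  exact hv y (by rw [hv']; rfl) rfl

lemma L0 {K : ℕ} (hK : 0 < K) (y : α) (c : ℕ → ℤ) (Qq : R α) :
    (polyF α y K c * Qq).coeff 1 = c 0 * Qq.coeff 1 := by
  rw [eval_polyF_mul]
  rw [Finset.sum_eq_single_of_mem 0 (Finset.mem_range.2 hK)]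
  · rw [pow_zero]
    exact single_one_mul_apply Qq (c 0) 1
  · intro k _ hk
    refine single_mul_apply_of_not_exists_mul _ _ ?_
    rintro ⟨d, hd⟩
    have := congrArg FreeMonoid.length hd
    rw [FreeMonoid.length_mul] at this
    have hlen : (FreeMonoid.of y ^ k).length = k := length_of_pow α y k
    rw [FreeMonoid.length_one, hlen] at this
    omega

lemma L1 {K : ℕ} (hK : 0 < K) {y x : α} (hxy : x ≠ y) (c : ℕ → ℤ) (Qq : R α) (v : List α) :
    (polyF α y K c * Qq).coeff (FreeMonoid.ofList (x :: v)) =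
      c 0 * Qq.coeff (FreeMonoid.ofList (x :: v)) := by
  rw [eval_polyF_mul]
  rw [Finset.sum_eq_single_of_mem 0 (Finset.mem_range.2 hK)]
  · rw [pow_zero]
    exact single_one_mul_apply Qq (c 0) _
  · intro k _ hk
    exact single_mul_apply_of_not_exists_mul _ _ (no_div_of_head_ne α (by omega) hxy)

lemma L2 {K : ℕ} (hK : 2 ≤ K) (y : α) {v : List α} (hv : ∀ z ∈ v.head?, z ≠ y)
    (c : ℕ → ℤ) (Qq : R α) :
    (polyF α y K c * Qq).coeff (FreeMonoid.ofList (y :: v)) =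
      c 0 * Qq.coeff (FreeMonoid.ofList (y :: v)) + c 1 * Qq.coeff (FreeMonoid.ofList v) := by
  rw [eval_polyF_mul]
  rw [← Finset.sum_subset (Finset.range_subset_range.2 hK)]
  · rw [Finset.sum_range_succ, Finset.sum_range_one, pow_zero]
    congr 1
    · exact single_one_mul_apply Qq (c 0) _
    · rw [pow_one]
      refine coeff_single_mul_eq_mul_coeff _ (fun a _ => ?_)
      constructor
      · intro h
        have := congrArg FreeMonoid.toList h
        rw [FreeMonoid.toList_mul, FreeMonoid.toList_of, FreeMonoid.toList_ofList] at this
        have h2 : FreeMonoid.toList a = v := (List.cons.injEq .. ▸ this).2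
        exact FreeMonoid.toList.injective (by rw [h2]; rfl)
      · rintro rfl
        rfl
  · intro k _ hk
    exact single_mul_apply_of_not_exists_mul _ _
      (no_div_of_head_tail α (by simp at hk; omega) hv)


open Polynomial in
lemma av_eq_polyF (p : Polynomial ℤ) (y : α) {K : ℕ} (hK : p.natDegree < K) :
    av α (y := y) p = polyF α y K p.coeff := by
  rw [av, Polynomial.aeval_eq_sum_range' hK, polyF]
  refine Finset.sum_congr rfl (fun k _ => ?_)
  have hX : (Xg α y) ^ k = single (FreeMonoid.of y ^ k) 1 := by
    rw [Xg, single_pow, one_pow]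
  rw [hX, MonoidAlgebra.smul_single', mul_one]

/-- the polynomial representing a syllable -/
noncomputable def qpoly (e : ℤ) : Polynomial ℤ :=
  if 0 < e then (1 + Polynomial.X) ^ e.toNat else (G n) ^ (-e).toNat

open Polynomial in
lemma onePlusX_pow_coeff (k : ℕ) :
    ((1 + Polynomial.X : Polynomial ℤ) ^ k).coeff 0 = 1 ∧
    ((1 + Polynomial.X : Polynomial ℤ) ^ k).coeff 1 = k := by
  induction k with
  | zero => simp [Polynomial.coeff_one]
  | succ k ih =>
    rw [pow_succ]
    constructor
    · rw [Polynomial.mul_coeff_zero, ih.1]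
      simp
    · rw [mul_add, mul_one, Polynomial.coeff_add, ih.2,
        show (1 : ℕ) = 0 + 1 from rfl, Polynomial.coeff_mul_X, ih.1]
      push_cast
      ring

open Polynomial in
lemma G_coeff (hn : 2 ≤ n) : (G n).coeff 0 = 1 ∧ (G n).coeff 1 = -1 := by
  rw [G]
  constructor
  · rw [Polynomial.finset_sum_coeff]
    rw [Finset.sum_eq_single_of_mem 0 (Finset.mem_range.2 (by omega))]
    · simp
    · intro j _ hj
      rw [neg_pow, show ((-1 : Polynomial ℤ)) ^ j = Polynomial.C ((-1 : ℤ) ^ j) by simp,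
        Polynomial.coeff_C_mul, Polynomial.coeff_X_pow]
      simp [Ne.symm hj]
  · rw [Polynomial.finset_sum_coeff]
    rw [Finset.sum_eq_single_of_mem 1 (Finset.mem_range.2 (by omega))]
    · simp
    · intro j _ hj
      rw [neg_pow, show ((-1 : Polynomial ℤ)) ^ j = Polynomial.C ((-1 : ℤ) ^ j) by simp,
        Polynomial.coeff_C_mul, Polynomial.coeff_X_pow]
      simp [Ne.symm hj]


open Polynomial in
lemma coeff_mul_one' (p q : Polynomial ℤ) :
    (p * q).coeff 1 = p.coeff 0 * q.coeff 1 + p.coeff 1 * q.coeff 0 := by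
  rw [Polynomial.coeff_mul, show (1 : ℕ) = 0 + 1 from rfl, Finset.Nat.antidiagonal_succ]
  rw [Finset.sum_cons, Finset.Nat.antidiagonal_zero, Finset.map_singleton, Finset.sum_singleton]
  rfl

open Polynomial in
lemma G_pow_coeff (hn : 2 ≤ n) (k : ℕ) :
    ((G n) ^ k).coeff 0 = 1 ∧ ((G n) ^ k).coeff 1 = -(k : ℤ) := by
  induction k with
  | zero => simp [Polynomial.coeff_one]
  | succ k ih =>
    rw [pow_succ]
    refine ⟨?_, ?_⟩
    · rw [Polynomial.mul_coeff_zero, ih.1, (G_coeff n hn).1, one_mul]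
    · rw [coeff_mul_one', ih.1, ih.2, (G_coeff n hn).1, (G_coeff n hn).2]
      push_cast
      ring

lemma qpoly_coeff_zero (hn : 2 ≤ n) (e : ℤ) : (qpoly n e).coeff 0 = 1 := by
  rw [qpoly]
  split
  · exact (onePlusX_pow_coeff _).1
  · exact (G_pow_coeff n hn _).1

lemma qpoly_coeff_one (hn : 2 ≤ n) (e : ℤ) : (qpoly n e).coeff 1 = e := by
  rw [qpoly]
  split
  · rw [(onePlusX_pow_coeff _).2]
    omega
  · rw [(G_pow_coeff n hn _).2]
    omega

/-- factor of the Magnus expansion for a syllable -/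
noncomputable def Fac (p : α × ℤ) : R α := av α (y := p.1) (qpoly n p.2)

noncomputable def MM (S : List (α × ℤ)) : R α := (S.map (Fac α n)).prod

lemma Fac_eq (p : α × ℤ) :
    Fac α n p = polyF α p.1 ((qpoly n p.2).natDegree + 2) (qpoly n p.2).coeff :=
  av_eq_polyF α _ _ (by omega)

lemma one_apply_ofList_ne (v : List α) (hv : v ≠ []) :
    (1 : R α).coeff (FreeMonoid.ofList v) = 0 := by
  rw [MonoidAlgebra.one_def]
  refine Finsupp.single_eq_of_ne' (fun h => hv ?_)
  have := congrArg FreeMonoid.toList h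
  rw [FreeMonoid.toList_ofList] at this
  exact this.symm

lemma MM_cons (p : α × ℤ) (T : List (α × ℤ)) :
    MM α n (p :: T) = Fac α n p * MM α n T := by
  rw [MM, List.map_cons, List.prod_cons, MM]

lemma MM_squarefree_zero :
    ∀ (T : List (α × ℤ)) (v : List α), v.Chain' (· ≠ ·) → T.length < v.length →
      (MM α n T).coeff (FreeMonoid.ofList v) = 0 := by
  intro T
  induction T with
  | nil =>
    intro v _ hlen
    exact one_apply_ofList_ne α v (by intro h; subst h; simp at hlen)
  | cons p T ih =>
    obtain ⟨y, e⟩ := p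
    intro v hchain hlen
    rcases v with - | ⟨x, v'⟩
    · simp at hlen
    rw [MM_cons, Fac_eq]
    by_cases hx : x = y
    · subst hx
      have hv : ∀ z ∈ v'.head?, z ≠ x := by
        rcases v' with - | ⟨z, v''⟩
        · intro z hz; simp at hz
        · intro w hw
          simp only [List.head?_cons, Option.mem_some_iff] at hw
          subst hw
          exact fun h => (List.isChain_cons_cons.mp hchain).1 h.symm
      rw [L2 α (by omega) x hv]
      have h1 : (MM α n T).coeff (FreeMonoid.ofList (x :: v')) = 0 :=
        ih (x :: v') hchain (by simp only [List.length_cons] at hlen ⊢; omega)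
      have h2 : (MM α n T).coeff (FreeMonoid.ofList v') = 0 :=
        ih v' hchain.tail (by simp only [List.length_cons] at hlen ⊢; omega)
      rw [h1, h2, mul_zero, mul_zero, add_zero]
    · rw [L1 α (by omega) hx]
      rw [ih (x :: v') hchain (by simp only [List.length_cons] at hlen ⊢; omega), mul_zero]

lemma MM_coeff_word (hn : 2 ≤ n) :
    ∀ (S : List (α × ℤ)), S.Chain' (fun p q => p.1 ≠ q.1) →
      (MM α n S).coeff (FreeMonoid.ofList (S.map Prod.fst)) = (S.map Prod.snd).prod := by
  intro S
  induction S with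
  | nil => simp [MM, MonoidAlgebra.one_def]
  | cons p S ih =>
    intro hchain
    obtain ⟨y, e⟩ := p
    rw [MM_cons, List.map_cons, Fac_eq]
    have hv : ∀ z ∈ (S.map Prod.fst).head?, z ≠ y := by
      rcases S with - | ⟨q, S'⟩
      · intro z hz; simp at hz
      · intro w hw
        simp only [List.map_cons, List.head?_cons, Option.mem_some_iff] at hw
        subst hw
        exact fun h => (List.isChain_cons_cons.mp hchain).1 h.symm
    rw [L2 α (by omega) y hv]
    have h1 : (MM α n S).coeff (FreeMonoid.ofList (y :: S.map Prod.fst)) = 0 := by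
      refine MM_squarefree_zero α n S (y :: S.map Prod.fst) ?_ (by simp)
      have h2 : (y :: S.map Prod.fst) = ((y, e) :: S).map Prod.fst := by simp
      rw [h2]; refine (List.isChain_map _).2 ?_
      exact hchain
    rw [h1, mul_zero, zero_add, ih hchain.tail, qpoly_coeff_one n hn]
    simp


lemma coe_U_pow (y : α) (k : ℕ) :
    (↑(U α n y ^ k) : Q α n) = pi α n (av α (y := y) ((1 + Polynomial.X) ^ k)) := by
  rw [Units.val_pow_eq_pow_val, map_pow, map_pow]
  rfl

lemma coe_U_inv_pow (y : α) (k : ℕ) :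
    (↑((U α n y)⁻¹ ^ k) : Q α n) = pi α n (av α (y := y) ((G n) ^ k)) := by
  rw [Units.val_pow_eq_pow_val, map_pow, map_pow]
  rfl

lemma coe_U_zpow (y : α) (e : ℤ) :
    (↑(U α n y ^ e) : Q α n) = pi α n (Fac α n (y, e)) := by
  rw [Fac]
  match e with
  | Int.ofNat k =>
    have hq : qpoly n ((y, (Int.ofNat k : ℤ)).2) = (1 + Polynomial.X) ^ k := by
      show qpoly n (k : ℤ) = _
      rcases Nat.eq_zero_or_pos k with hk | hk
      · subst hk
        simp [qpoly, pow_zero]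
      · rw [qpoly, if_pos (by exact_mod_cast hk)]
        congr 1
    rw [hq, show (Int.ofNat k : ℤ) = (k : ℤ) from rfl, zpow_natCast, coe_U_pow]
  | Int.negSucc k =>
    have hq : qpoly n ((y, (Int.negSucc k : ℤ)).2) = (G n) ^ (k + 1) := by
      show qpoly n (Int.negSucc k) = _
      rw [qpoly, if_neg (not_lt.mpr (le_of_lt (Int.negSucc_lt_zero k)))]
      congr 1
    rw [hq, zpow_negSucc, ← inv_pow, coe_U_inv_pow]

lemma mu_syllable_prod (S : List (α × ℤ)) :
    (↑(mu α n ((S.map (fun p => FreeGroup.of p.1 ^ p.2)).prod)) : Q α n) =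
      pi α n (MM α n S) := by
  rw [map_list_prod]
  have h1 : (↑((List.map (mu α n) (S.map (fun p => FreeGroup.of p.1 ^ p.2))).prod) : Q α n) =
      ((List.map (mu α n) (S.map (fun p => FreeGroup.of p.1 ^ p.2))).map
        (Units.coeHom (Q α n))).prod := map_list_prod (Units.coeHom (Q α n)) _
  rw [h1, List.map_map, List.map_map]
  have h2 : pi α n (MM α n S) = (List.map (⇑(pi α n) ∘ Fac α n) S).prod := by
    rw [MM, map_list_prod (pi α n), List.map_map]
  rw [h2]
  congr 1
  refine List.map_congr_left (fun p _ => ?_)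
  show (↑(mu α n (FreeGroup.of p.1 ^ p.2)) : Q α n) = pi α n (Fac α n p)
  rw [map_zpow]
  have h2 : mu α n (FreeGroup.of p.1) = U α n p.1 := FreeGroup.lift_apply_of
  rw [h2, coe_U_zpow]


/-! ### Syllable decomposition -/

lemma chain'_of_no_cancel (l : List (α × Bool))
    (h : ∀ (l₁ : List (α × Bool)) (x : α) (b : Bool) (l₂), l ≠ l₁ ++ (x, b) :: (x, !b) :: l₂) :
    l.Chain' (fun p q => ¬(p.1 = q.1 ∧ q.2 = !p.2)) := by
  induction l with
  | nil => exact List.isChain_nil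
  | cons a l ih =>
    rcases l with - | ⟨c, t⟩
    · exact List.isChain_singleton a
    · refine List.isChain_cons_cons.2 ⟨?_, ih ?_⟩
      · rintro ⟨h1, h2⟩
        refine h [] a.1 a.2 t ?_
        rw [List.nil_append]
        obtain ⟨a1, a2⟩ := a
        obtain ⟨c1, c2⟩ := c
        simp only at h1 h2
        subst h1
        subst h2
        rfl
      · intro l₁ x b l₂ heq
        exact h (a :: l₁) x b l₂ (by rw [heq, List.cons_append])

lemma toWord_chain' [DecidableEq α] (g : FreeGroup α) :
    g.toWord.Chain' (fun p q => ¬(p.1 = q.1 ∧ q.2 = !p.2)) := by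
  refine chain'_of_no_cancel α _ (fun l₁ x b l₂ heq => ?_)
  have h2 : FreeGroup.reduce g.toWord = l₁ ++ (x, b) :: (x, !b) :: l₂ := by
    rw [FreeGroup.reduce_toWord, heq]
  exact FreeGroup.reduce.not h2

lemma mk_single_eq (x : α) (b : Bool) :
    FreeGroup.mk [(x, b)] = FreeGroup.of x ^ (if b then (1 : ℤ) else -1) := by
  have hof : FreeGroup.of x = FreeGroup.mk [(x, true)] := rfl
  cases b
  · rw [if_neg (by simp), zpow_neg_one, hof, FreeGroup.inv_mk]
    rfl
  · rw [if_pos rfl, zpow_one, hof]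

lemma exists_syllables :
    ∀ (ℓ : List (α × Bool)), ℓ.Chain' (fun p q => ¬(p.1 = q.1 ∧ q.2 = !p.2)) →
      ∃ S : List (α × ℤ),
        FreeGroup.mk ℓ = (S.map (fun p => FreeGroup.of p.1 ^ p.2)).prod ∧
        S.Chain' (fun p q => p.1 ≠ q.1) ∧ (∀ p ∈ S, p.2 ≠ 0) ∧
        (∀ x b t, ℓ = (x, b) :: t →
          ∃ e S', S = (x, e) :: S' ∧ (0 < e ↔ b = true)) ∧
        (ℓ = [] → S = []) := by
  intro ℓ
  induction ℓ with
  | nil =>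
    intro _
    refine ⟨[], by simp [FreeGroup.one_eq_mk.symm], List.isChain_nil, by simp, ?_, fun _ => rfl⟩
    intro x b t heq
    exact absurd heq (by simp)
  | cons a t ih =>
    obtain ⟨x, b⟩ := a
    intro hchain
    obtain ⟨St, hprod, hch, hnz, hhead, hnil⟩ := ih hchain.tail
    have hsplit : FreeGroup.mk ((x, b) :: t) = FreeGroup.mk [(x, b)] * FreeGroup.mk t := by
      rw [FreeGroup.mul_mk]
      rfl
    set δ : ℤ := if b then (1 : ℤ) else -1 with hδ
    have hδ0 : δ ≠ 0 := by rcases b <;> simp [hδ]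
    have hδsign : 0 < δ ↔ b = true := by rcases b <;> simp [hδ]
    rcases t with - | ⟨⟨x', b'⟩, t'⟩
    · refine ⟨[(x, δ)], ?_, List.isChain_singleton _, ?_, ?_, by simp⟩
      · rw [hsplit, show FreeGroup.mk ([] : List (α × Bool)) = 1 from FreeGroup.one_eq_mk.symm,
          mul_one, List.map_singleton, List.prod_singleton, mk_single_eq, ← hδ]
      · intro p hp
        simp only [List.mem_singleton] at hp
        subst hp
        exact hδ0
      · intro z c s heq
        injection heq with h1 h2
        injection h1 with hx hb
        subst hx
        exact ⟨δ, [], rfl, hb ▸ hδsign⟩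
    · obtain ⟨e', S'', rfl, hsign⟩ := hhead x' b' t' rfl
      have hmkt : FreeGroup.mk ((x, b) :: (x', b') :: t') =
          FreeGroup.of x ^ δ * ((((x', e') :: S'')).map
            (fun p => FreeGroup.of p.1 ^ p.2)).prod := by
        rw [hsplit, hprod, mk_single_eq, ← hδ]
      by_cases hxx : x = x'
      · subst hxx
        have hbb : b' = b := by
          have hc := (List.isChain_cons_cons.mp hchain).1
          rcases b <;> rcases b' <;> simp_all
        subst hbb
        have he'0 : e' ≠ 0 := hnz (x, e') List.mem_cons_self
        have key : (0 < δ + e' ↔ b' = true) ∧ δ + e' ≠ 0 := by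
          rcases b'
          · have h1 : ¬ (0 < e') := by rw [hsign]; simp
            have h2 : δ = -1 := by simp [hδ]
            rw [h2]
            simp only [Bool.false_eq_true, iff_false, not_lt]
            omega
          · have h1 : 0 < e' := hsign.mpr rfl
            have h2 : δ = 1 := by simp [hδ]
            rw [h2]
            simp only [iff_true]
            omega
        refine ⟨(x, δ + e') :: S'', ?_, ?_, ?_, ?_, by simp⟩
        · rw [hmkt, List.map_cons, List.prod_cons, List.map_cons, List.prod_cons,
            ← mul_assoc, ← zpow_add]
        · rcases S'' with - | ⟨q, S₃⟩
          · exact List.isChain_singleton _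
          · exact List.isChain_cons_cons.2 ⟨(List.isChain_cons_cons.mp hch).1, (List.isChain_cons_cons.mp hch).2⟩
        · intro p hp
          rcases List.mem_cons.mp hp with rfl | hp'
          · exact key.2
          · exact hnz p (List.mem_cons_of_mem _ hp')
        · intro z c s heq
          injection heq with h1 h2
          injection h1 with hx hb
          subst hx
          exact ⟨δ + e', S'', rfl, hb ▸ key.1⟩
      · refine ⟨(x, δ) :: (x', e') :: S'', ?_, ?_, ?_, ?_, by simp⟩
        · rw [hmkt, List.map_cons, List.prod_cons]
          rfl
        · exact List.isChain_cons_cons.2 ⟨hxx, hch⟩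
        · intro p hp
          rcases List.mem_cons.mp hp with rfl | hp'
          · exact hδ0
          · exact hnz p hp'
        · intro z c s heq
          injection heq with h1 h2
          injection h1 with hx hb
          subst hx
          exact ⟨δ, (x', e') :: S'', rfl, hb ▸ hδsign⟩

end MagnusAux

open MagnusAux in
/-- The lower central series of a free group has trivial intersection. -/
theorem iInf_lowerCentralSeries_freeGroup (α : Type*) :
    ⨅ n : ℕ, (⊤ : Subgroup (FreeGroup α)).lowerCentralSeries n = ⊥ := by
  classical
  rw [eq_bot_iff]
  intro g hg
  rw [Subgroup.mem_iInf] at hg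
  rw [Subgroup.mem_bot]
  by_contra hne
  have hw : g.toWord ≠ [] := fun h => hne (FreeGroup.toWord_eq_nil_iff.mp h)
  obtain ⟨S, hprod, hchain, hnz, hhead, -⟩ :=
    exists_syllables α g.toWord (toWord_chain' α g)
  rw [FreeGroup.mk_toWord] at hprod
  have hSne : S ≠ [] := by
    rcases hℓ : g.toWord with - | ⟨⟨x, b⟩, t⟩
    · exact absurd hℓ hw
    · obtain ⟨e, S', hS, -⟩ := hhead x b t hℓ
      rw [hS]
      simp
  set n := S.length + 1 with hn
  have hn2 : 2 ≤ n := by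
    have : S.length ≠ 0 := fun h => hSne (List.length_eq_zero_iff.mp h)
    omega
  -- Magnus image of g is trivial
  have h1 : (↑(mu α n g) : Q α n) - 1 ∈ D α n (n + 1) := lcs_mem α n n g (hg n)
  have h2 : (↑(mu α n g) : Q α n) - 1 = 0 :=
    D_n_eq_zero α n (D_mono α n (Nat.le_succ n) h1)
  have h3 : (↑(mu α n g) : Q α n) = 1 := by
    have := sub_eq_zero.mp h2
    exact this
  -- Magnus image computed via syllables
  have h4 : (↑(mu α n g) : Q α n) = pi α n (MM α n S) := by
    rw [hprod]
    exact mu_syllable_prod α n S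
  have h5 : pi α n (MM α n S) = pi α n 1 := by rw [← h4, h3, map_one]
  have h6 : MM α n S - 1 ∈ E α n := (pi_eq_pi_iff α n).mp h5
  -- coefficient of the syllable word
  set u : FreeMonoid α := FreeMonoid.ofList (S.map Prod.fst) with hu
  have hulen : u.length < n := by
    show (S.map Prod.fst).length < n
    rw [List.length_map]
    omega
  have h7 : coeffHom α u (MM α n S - 1) = 0 := coeff_E α h6 hulen
  have h8 : coeffHom α u (MM α n S) = (S.map Prod.snd).prod := by
    rw [coeffHom_apply, hu]
    exact MM_coeff_word α n hn2 S hchain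
  have h9 : coeffHom α u (1 : R α) = 0 := by
    rw [coeffHom_apply, hu]
    exact one_apply_ofList_ne α _ (by simpa using hSne)
  rw [map_sub, h8, h9, sub_zero] at h7
  have h10 : (S.map Prod.snd).prod ≠ 0 := by
    refine List.prod_ne_zero (fun h0 => ?_)
    obtain ⟨p, hp, hp0⟩ := List.mem_map.mp h0
    exact hnz p hp hp0
  exact h10 h7
end

section
/- Let F be the free group on two generators a, b. Then the commutator subgroup F₂ = [F,F] is freely generated by the commutators [aⁿ, bᵐ], where n and m range over all nonzero integers. -/
namespace CommFreeAux

noncomputable section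

abbrev I : Type := {p : ℤ × ℤ // p.1 ≠ 0 ∧ p.2 ≠ 0}

abbrev ga : FreeGroup Bool := FreeGroup.of false
abbrev gb : FreeGroup Bool := FreeGroup.of true

/-- The candidate basis map, sending an index `(n, m)` to `[aⁿ, bᵐ]`. -/
def φ : FreeGroup I →* FreeGroup Bool :=
  FreeGroup.lift (fun p => (ga ^ p.1.1)⁻¹ * (gb ^ p.1.2)⁻¹ * ga ^ p.1.1 * gb ^ p.1.2)

lemma φ_of (p : I) :
    φ (FreeGroup.of p) = (ga ^ p.1.1)⁻¹ * (gb ^ p.1.2)⁻¹ * ga ^ p.1.1 * gb ^ p.1.2 :=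
  FreeGroup.lift_apply_of

/-- `V n m` is the element of the abstract free group mapping to `bᵐ aⁿ b⁻ᵐ a⁻ⁿ` under `φ`. -/
def V (n m : ℤ) : FreeGroup I :=
  if h : n = 0 ∨ m = 0 then 1
  else (FreeGroup.of (⟨(-n, -m),
    ⟨neg_ne_zero.2 (not_or.1 h).1, neg_ne_zero.2 (not_or.1 h).2⟩⟩ : I))⁻¹

lemma V_zero_left (m : ℤ) : V 0 m = 1 := dif_pos (Or.inl rfl)
lemma V_zero_right (n : ℤ) : V n 0 = 1 := dif_pos (Or.inr rfl)

lemma V_ne (n m : ℤ) (hn : n ≠ 0) (hm : m ≠ 0) :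
    V n m = (FreeGroup.of (⟨(-n, -m), ⟨neg_ne_zero.2 hn, neg_ne_zero.2 hm⟩⟩ : I))⁻¹ :=
  dif_neg (by tauto)

lemma φ_V (n m : ℤ) : φ (V n m) = gb ^ m * ga ^ n * gb ^ (-m) * ga ^ (-n) := by
  unfold V
  split
  · rename_i h
    rcases h with h | h <;> subst h <;> simp only [map_one] <;> group
  · rw [map_inv, φ_of]
    group

/-- The permutation of `ℤ × ℤ × FreeGroup I` corresponding to the generator `a`. -/
def A : Equiv.Perm (ℤ × ℤ × FreeGroup I) where
  toFun x := (x.1 + 1, x.2.1, x.2.2 * ((V x.1 x.2.1)⁻¹ * V (x.1 + 1) x.2.1))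
  invFun x := (x.1 - 1, x.2.1, x.2.2 * ((V x.1 x.2.1)⁻¹ * V (x.1 - 1) x.2.1))
  left_inv := by
    rintro ⟨p, q, w⟩
    simp only [add_sub_cancel_right]
    refine Prod.ext rfl (Prod.ext rfl ?_)
    simp [mul_assoc]
  right_inv := by
    rintro ⟨p, q, w⟩
    simp only [sub_add_cancel]
    refine Prod.ext rfl (Prod.ext rfl ?_)
    simp [mul_assoc]

/-- The permutation of `ℤ × ℤ × FreeGroup I` corresponding to the generator `b`. -/
def B : Equiv.Perm (ℤ × ℤ × FreeGroup I) where
  toFun x := (x.1, x.2.1 + 1, x.2.2)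
  invFun x := (x.1, x.2.1 - 1, x.2.2)
  left_inv := by rintro ⟨p, q, w⟩; simp
  right_inv := by rintro ⟨p, q, w⟩; simp

/-- The (right) action of the free group on `ℤ × ℤ × FreeGroup I`, as a homomorphism into
the opposite of the permutation group (so that words act letter-by-letter, left to right). -/
def Ψ : FreeGroup Bool →* (Equiv.Perm (ℤ × ℤ × FreeGroup I))ᵐᵒᵖ :=
  FreeGroup.lift (fun x => MulOpposite.op (bif x then B else A))

def act (g : FreeGroup Bool) : ℤ × ℤ × FreeGroup I → ℤ × ℤ × FreeGroup I :=
  (Ψ g).unop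

lemma act_mul (g h : FreeGroup Bool) (x : ℤ × ℤ × FreeGroup I) :
    act (g * h) x = act h (act g x) := by
  simp [act, map_mul]

lemma act_one (x : ℤ × ℤ × FreeGroup I) : act 1 x = x := by
  simp [act]

lemma Ψ_a : Ψ ga = MulOpposite.op A := FreeGroup.lift_apply_of
lemma Ψ_b : Ψ gb = MulOpposite.op B := FreeGroup.lift_apply_of

lemma act_a (x : ℤ × ℤ × FreeGroup I) : act ga x = A x := by
  simp [act, Ψ_a]

lemma act_b (x : ℤ × ℤ × FreeGroup I) : act gb x = B x := by
  simp [act, Ψ_b]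

lemma act_a_inv (x : ℤ × ℤ × FreeGroup I) : act ga⁻¹ x = A⁻¹ x := by
  simp [act, Ψ_a]

lemma act_b_inv (x : ℤ × ℤ × FreeGroup I) : act gb⁻¹ x = B⁻¹ x := by
  simp [act, Ψ_b]

lemma A_zpow (k : ℤ) : ∀ (p q : ℤ) (w : FreeGroup I),
    (A ^ k) (p, q, w) = (p + k, q, w * ((V p q)⁻¹ * V (p + k) q)) := by
  induction k using Int.induction_on with
  | zero => intro p q w; simp
  | succ i ih =>
    intro p q w
    have h0 : A ^ ((i : ℤ) + 1) = A ^ (i : ℤ) * A := zpow_add_one A i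
    rw [h0, Equiv.Perm.mul_apply]
    have hAx : A (p, q, w) = (p + 1, q, w * ((V p q)⁻¹ * V (p + 1) q)) := rfl
    rw [hAx, ih]
    have h1 : p + 1 + (i : ℤ) = p + ((i : ℤ) + 1) := by ring
    refine Prod.ext (by push_cast; ring) (Prod.ext rfl ?_)
    simp only [h1]
    simp [mul_assoc]
  | pred i ih =>
    intro p q w
    have h0 : A ^ (-(i : ℤ) - 1) = A ^ (-(i : ℤ)) * A⁻¹ := zpow_sub_one A (-(i : ℤ))
    rw [h0, Equiv.Perm.mul_apply]
    have hAx : A⁻¹ (p, q, w) = (p - 1, q, w * ((V p q)⁻¹ * V (p - 1) q)) := rfl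
    rw [hAx, ih]
    have h1 : p - 1 + (-(i : ℤ)) = p + (-(i : ℤ) - 1) := by ring
    refine Prod.ext (by push_cast; ring) (Prod.ext rfl ?_)
    simp only [h1]
    simp [mul_assoc]

lemma act_a_zpow (k p q : ℤ) (w : FreeGroup I) :
    act (ga ^ k) (p, q, w) = (p + k, q, w * ((V p q)⁻¹ * V (p + k) q)) := by
  have hA : act (ga ^ k) = ⇑(A ^ k) := by
    funext x
    simp [act, map_zpow, Ψ_a]
  rw [hA, A_zpow]

lemma B_zpow (k : ℤ) : ∀ (p q : ℤ) (w : FreeGroup I),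
    (B ^ k) (p, q, w) = (p, q + k, w) := by
  induction k using Int.induction_on with
  | zero => intro p q w; simp
  | succ i ih =>
    intro p q w
    have h0 : B ^ ((i : ℤ) + 1) = B ^ (i : ℤ) * B := zpow_add_one B i
    rw [h0, Equiv.Perm.mul_apply]
    have hBx : B (p, q, w) = (p, q + 1, w) := rfl
    rw [hBx, ih]
    refine Prod.ext rfl (Prod.ext (by push_cast; ring) rfl)
  | pred i ih =>
    intro p q w
    have h0 : B ^ (-(i : ℤ) - 1) = B ^ (-(i : ℤ)) * B⁻¹ := zpow_sub_one B (-(i : ℤ))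
    rw [h0, Equiv.Perm.mul_apply]
    have hBx : B⁻¹ (p, q, w) = (p, q - 1, w) := rfl
    rw [hBx, ih]
    refine Prod.ext rfl (Prod.ext (by push_cast; ring) rfl)

lemma act_b_zpow (k p q : ℤ) (w : FreeGroup I) :
    act (gb ^ k) (p, q, w) = (p, q + k, w) := by
  have hB : act (gb ^ k) = ⇑(B ^ k) := by
    funext x
    simp [act, map_zpow, Ψ_b]
  rw [hB, B_zpow]

/-- The key structural lemma: the action of `g` starting from `(p, q, w)` records, in the third
coordinate, a word `x` of the abstract free group satisfying the Schreier rewriting identity. -/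
lemma main (g : FreeGroup Bool) : ∀ p q : ℤ, ∀ w : FreeGroup I,
    ∃ (p' q' : ℤ) (x : FreeGroup I),
      act g (p, q, w) = (p', q', w * x) ∧
      ga ^ p * gb ^ q * g = φ x * (ga ^ p' * gb ^ q') := by
  have hpure : ∀ x : Bool, (pure x : FreeGroup Bool) = FreeGroup.of x := fun _ => rfl
  induction g using FreeGroup.induction_on with
  | C1 =>
    intro p q w
    exact ⟨p, q, 1, by rw [act_one]; simp, by simp⟩
  | of x =>
    intro p q w
    cases x with
    | false =>
      refine ⟨p + 1, q, (V p q)⁻¹ * V (p + 1) q, by rw [act_a]; rfl, ?_⟩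
      rw [map_mul, map_inv, φ_V, φ_V]
      group
    | true =>
      refine ⟨p, q + 1, 1, by rw [act_b]; simp; rfl, ?_⟩
      rw [map_one]
      group
  | inv_of x _ =>
    intro p q w
    cases x with
    | false =>
      refine ⟨p - 1, q, (V p q)⁻¹ * V (p - 1) q, by rw [act_a_inv]; rfl, ?_⟩
      rw [map_mul, map_inv, φ_V, φ_V]
      group
    | true =>
      refine ⟨p, q - 1, 1, by rw [act_b_inv]; simp; rfl, ?_⟩
      rw [map_one]
      group
  | mul g h ihg ihh =>
    intro p q w
    obtain ⟨p₁, q₁, x₁, h₁, h₁'⟩ := ihg p q w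
    obtain ⟨p₂, q₂, x₂, h₂, h₂'⟩ := ihh p₁ q₁ (w * x₁)
    refine ⟨p₂, q₂, x₁ * x₂, ?_, ?_⟩
    · rw [act_mul, h₁, h₂, mul_assoc]
    · rw [← mul_assoc, h₁', mul_assoc, h₂', map_mul, mul_assoc]

lemma act_φ (y : FreeGroup I) : ∀ w : FreeGroup I, act (φ y) (0, 0, w) = (0, 0, w * y) := by
  have hpure : ∀ u : I, (pure u : FreeGroup I) = FreeGroup.of u := fun _ => rfl
  induction y using FreeGroup.induction_on with
  | C1 => intro w; rw [map_one, act_one]; simp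
  | of u =>
    intro w
    obtain ⟨⟨n, m⟩, hn, hm⟩ := u
    have hφ : φ (FreeGroup.of (⟨(n, m), hn, hm⟩ : I)) =
        ga ^ (-n) * gb ^ (-m) * ga ^ n * gb ^ m := by
      rw [φ_of, zpow_neg, zpow_neg]
    have hVn : V (-n) (-m) = (FreeGroup.of (⟨(n, m), hn, hm⟩ : I))⁻¹ := by
      rw [V_ne (-n) (-m) (neg_ne_zero.2 hn) (neg_ne_zero.2 hm)]
      congr 1
      exact congrArg FreeGroup.of (Subtype.ext (by simp))
    rw [hφ, act_mul, act_mul, act_mul]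
    rw [act_a_zpow (-n)]
    simp only [V_zero_left, zero_add, inv_one, one_mul, V_zero_right, mul_one]
    rw [act_b_zpow (-m)]
    simp only [zero_add]
    rw [act_a_zpow n]
    rw [hVn, neg_add_cancel, V_zero_left, inv_inv, mul_one]
    rw [act_b_zpow m, neg_add_cancel]
  | inv_of u ih =>
    intro w
    have hinj : Function.Injective (act (φ (FreeGroup.of u))) := by
      intro s t hst
      have : (Ψ (φ (FreeGroup.of u))).unop s = (Ψ (φ (FreeGroup.of u))).unop t := hst
      exact (Ψ (φ (FreeGroup.of u))).unop.injective this
    apply hinj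
    have h1 : act (φ (FreeGroup.of u)) (act (φ (FreeGroup.of u)⁻¹) (0, 0, w)) = (0, 0, w) := by
      rw [← act_mul, ← map_mul, inv_mul_cancel, map_one, act_one]
    rw [h1, ih (w * (FreeGroup.of u)⁻¹)]
    simp
  | mul y z ihy ihz =>
    intro w
    rw [map_mul, act_mul, ihy, ihz, mul_assoc]

lemma φ_inj : Function.Injective φ := by
  have key : ∀ y : FreeGroup I, (act (φ y) (0, 0, 1)).2.2 = y := by
    intro y
    rw [act_φ y 1, one_mul]
  intro y z h
  rw [← key y, ← key z, h]

/-- Exponent-sum homomorphisms. -/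
def εa : FreeGroup Bool →* Multiplicative ℤ :=
  FreeGroup.lift (fun x => Multiplicative.ofAdd (if x then 0 else 1))

def εb : FreeGroup Bool →* Multiplicative ℤ :=
  FreeGroup.lift (fun x => Multiplicative.ofAdd (if x then 1 else 0))

lemma εa_φ (x : FreeGroup I) : εa (φ x) = 1 := by
  have : εa.comp φ = 1 := by
    apply FreeGroup.ext_hom
    intro u
    simp only [MonoidHom.comp_apply, φ_of, MonoidHom.one_apply]
    simp only [map_mul, map_inv, map_zpow, εa, FreeGroup.lift_apply_of]
    norm_num
  exact DFunLike.congr_fun this x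

lemma εb_φ (x : FreeGroup I) : εb (φ x) = 1 := by
  have : εb.comp φ = 1 := by
    apply FreeGroup.ext_hom
    intro u
    simp only [MonoidHom.comp_apply, φ_of, MonoidHom.one_apply]
    simp only [map_mul, map_inv, map_zpow, εb, FreeGroup.lift_apply_of]
    norm_num
  exact DFunLike.congr_fun this x

open scoped commutatorElement in
lemma φ_range : φ.range = commutator (FreeGroup Bool) := by
  apply le_antisymm
  · rintro _ ⟨y, rfl⟩
    have hpure : ∀ u : I, (pure u : FreeGroup I) = FreeGroup.of u := fun _ => rfl
    induction y using FreeGroup.induction_on with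
    | C1 => simp only [map_one]; exact Subgroup.one_mem _
    | of u =>
      rw [φ_of]
      have : (ga ^ u.1.1)⁻¹ * (gb ^ u.1.2)⁻¹ * ga ^ u.1.1 * gb ^ u.1.2 =
          ⁅(ga ^ u.1.1)⁻¹, (gb ^ u.1.2)⁻¹⁆ := by
        rw [commutatorElement_def]; group
      rw [this, commutator_def]
      exact Subgroup.commutator_mem_commutator (Subgroup.mem_top _) (Subgroup.mem_top _)
    | inv_of u ih =>
      rw [map_inv]
      exact Subgroup.inv_mem _ ih
    | mul y z ihy ihz =>
      rw [map_mul]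
      exact Subgroup.mul_mem _ ihy ihz
  · intro g hg
    obtain ⟨p', q', x, -, hx⟩ := main g 0 0 1
    simp only [zpow_zero, one_mul] at hx
    have hag : εa g = 1 :=
      MonoidHom.mem_ker.mp (Abelianization.commutator_subset_ker εa hg)
    have hbg : εb g = 1 :=
      MonoidHom.mem_ker.mp (Abelianization.commutator_subset_ker εb hg)
    have hp' : p' = 0 := by
      have h := congrArg εa hx
      rw [hag, map_mul, εa_φ, one_mul, map_mul, map_zpow, map_zpow] at h
      simp only [εa, FreeGroup.lift_apply_of] at h
      have h2 := congrArg Multiplicative.toAdd h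
      simp only [toAdd_one, toAdd_mul, toAdd_zpow, toAdd_ofAdd] at h2
      simp at h2
      omega
    have hq' : q' = 0 := by
      have h := congrArg εb hx
      rw [hbg, map_mul, εb_φ, one_mul, map_mul, map_zpow, map_zpow] at h
      simp only [εb, FreeGroup.lift_apply_of] at h
      have h2 := congrArg Multiplicative.toAdd h
      simp only [toAdd_one, toAdd_mul, toAdd_zpow, toAdd_ofAdd] at h2
      simp at h2
      omega
    refine ⟨x, ?_⟩
    rw [hx, hp', hq']
    simp

/-- The explicit isomorphism between the abstract free group and the commutator subgroup. -/
def E : FreeGroup I ≃* commutator (FreeGroup Bool) :=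
  (MonoidHom.ofInjective φ_inj).trans (MulEquiv.subgroupCongr φ_range)

lemma E_of (p : I) : ((E (FreeGroup.of p) : commutator (FreeGroup Bool)) : FreeGroup Bool) =
    (ga ^ p.1.1)⁻¹ * (gb ^ p.1.2)⁻¹ * ga ^ p.1.1 * gb ^ p.1.2 := by
  rw [← φ_of]
  rw [show ((E (FreeGroup.of p) : commutator (FreeGroup Bool)) : FreeGroup Bool) =
      ((MonoidHom.ofInjective φ_inj (FreeGroup.of p) : φ.range) : FreeGroup Bool) from rfl]
  exact MonoidHom.ofInjective_apply φ_inj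

end

end CommFreeAux

/-- In the free group `F` on two generators `a`, `b`, the commutator subgroup `[F,F]`
is freely generated by the commutators `[aⁿ, bᵐ] = a⁻ⁿ b⁻ᵐ aⁿ bᵐ` for nonzero
integers `n`, `m`. -/
theorem commutator_freeGroup_free_basis :
    ∃ B : FreeGroupBasis {p : ℤ × ℤ // p.1 ≠ 0 ∧ p.2 ≠ 0}
      (commutator (FreeGroup Bool)),
      ∀ p : {p : ℤ × ℤ // p.1 ≠ 0 ∧ p.2 ≠ 0},
        ((B p : commutator (FreeGroup Bool)) : FreeGroup Bool) =
          (FreeGroup.of false ^ p.1.1)⁻¹ * (FreeGroup.of true ^ p.1.2)⁻¹ *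
            FreeGroup.of false ^ p.1.1 * FreeGroup.of true ^ p.1.2 := by
  refine ⟨FreeGroupBasis.ofRepr CommFreeAux.E.symm, fun p => ?_⟩
  have : (FreeGroupBasis.ofRepr CommFreeAux.E.symm) p = CommFreeAux.E (FreeGroup.of p) := by
    show CommFreeAux.E.symm.symm (FreeGroup.of p) = _
    rw [MulEquiv.symm_symm]
  rw [this]
  exact CommFreeAux.E_of p
end

section
/- In any group G, if b²a = ab² for elements a, b ∈ G, then for every natural number n, [a,b]^(2n) = [[a,b]^(-n), b]. -/
/-- If `b²a = ab²`, then `[a,b]^(2n) = [[a,b]⁻ⁿ, b]`, where `[x,y] = x⁻¹y⁻¹xy`. -/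
theorem comm_pow_even {G : Type*} [Group G] (a b : G) (h : b ^ 2 * a = a * b ^ 2)
    (n : ℕ) :
    (a⁻¹ * b⁻¹ * a * b) ^ (2 * n) =
      ((a⁻¹ * b⁻¹ * a * b) ^ (-(n : ℤ)))⁻¹ * b⁻¹ *
        (a⁻¹ * b⁻¹ * a * b) ^ (-(n : ℤ)) * b := by
  set c := a⁻¹ * b⁻¹ * a * b with hc
  have hconj : b⁻¹ * c * b = c⁻¹ := by
    calc b⁻¹ * c * b = b⁻¹ * a⁻¹ * b⁻¹ * (a * b ^ 2) := by rw [hc, pow_two]; group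
    _ = b⁻¹ * a⁻¹ * b⁻¹ * (b ^ 2 * a) := by rw [← h]
    _ = c⁻¹ := by rw [hc]; group
  have key : ∀ m : ℤ, b⁻¹ * c ^ m * b = c ^ (-m) := by
    intro m
    calc b⁻¹ * c ^ m * b = (b⁻¹ * c * b) ^ m := by
          have := conj_zpow (i := m) (a := b⁻¹) (b := c)
          simpa using this.symm
    _ = c ^ (-m) := by rw [hconj, inv_zpow, zpow_neg]
  have h2 : (c ^ (-(n : ℤ)))⁻¹ * b⁻¹ * c ^ (-(n : ℤ)) * b
      = c ^ (n : ℤ) * (b⁻¹ * c ^ (-(n : ℤ)) * b) := by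
    rw [zpow_neg, inv_inv]; group
  rw [h2, key, neg_neg, ← zpow_add, ← zpow_natCast c (2 * n)]
  push_cast
  ring_nf
end

section
/- In any group G, if b²a = ab² for elements a, b ∈ G, then for every natural number n, [a,b]^(2n+1) = [a·[a,b]^(-n), b]. -/
/-- If `b²a = ab²`, then `[a,b]^(2n+1) = [a·[a,b]⁻ⁿ, b]`, where `[x,y] = x⁻¹y⁻¹xy`. -/
theorem comm_pow_odd {G : Type*} [Group G] (a b : G) (h : b ^ 2 * a = a * b ^ 2)
    (n : ℕ) :
    (a⁻¹ * b⁻¹ * a * b) ^ (2 * n + 1) =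
      (a * (a⁻¹ * b⁻¹ * a * b) ^ (-(n : ℤ)))⁻¹ * b⁻¹ *
        (a * (a⁻¹ * b⁻¹ * a * b) ^ (-(n : ℤ))) * b := by
  set c := a⁻¹ * b⁻¹ * a * b with hc
  have h' : a * (b * b) = b * b * a := by rw [← pow_two, h]
  have key : b⁻¹ * c * b = c⁻¹ := by
    calc b⁻¹ * c * b = b⁻¹ * a⁻¹ * b⁻¹ * (a * (b * b)) := by rw [hc]; group
      _ = b⁻¹ * a⁻¹ * b⁻¹ * (b * b * a) := by rw [h']
      _ = c⁻¹ := by rw [hc]; group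
  have h2 : b⁻¹ * c ^ (-(n:ℤ)) * b = c ^ (n:ℤ) := by
    calc b⁻¹ * c ^ (-(n:ℤ)) * b = (b⁻¹ * c * (b⁻¹)⁻¹) ^ (-(n:ℤ)) := by
          rw [conj_zpow]; group
      _ = c ^ (n:ℤ) := by
          rw [show b⁻¹ * c * (b⁻¹)⁻¹ = c⁻¹ by rw [← key]; group,
            inv_zpow, ← zpow_neg, neg_neg]
  calc c ^ (2 * n + 1)
      = c ^ (n:ℤ) * c * c ^ (n:ℤ) := by group
    _ = c ^ (n:ℤ) * (a⁻¹ * b⁻¹ * a * b) * (b⁻¹ * c ^ (-(n:ℤ)) * b) := by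
        rw [h2, ← hc]
    _ = (a * c ^ (-(n:ℤ)))⁻¹ * b⁻¹ * (a * c ^ (-(n:ℤ))) * b := by group
end

section
/- In any group G, if b²a = ab², then every power [a,b]ⁿ (n ≥ 1) has commutator length at most 1. -/
/-- The set of elements of `G` expressible as a product of `n` commutators. -/
def IsProdOfNComms {G : Type*} [Group G] (n : ℕ) (g : G) : Prop :=
  ∃ l : List (G × G), l.length = n ∧ (l.map fun p => p.1⁻¹ * p.2⁻¹ * p.1 * p.2).prod = g

/-- The commutator length of `g`, valued in `ℕ∞` (`⊤` if `g` is not a product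
of commutators). -/
noncomputable def cl {G : Type*} [Group G] (g : G) : ℕ∞ :=
  sInf {n : ℕ∞ | ∃ k : ℕ, n = (k : ℕ∞) ∧ IsProdOfNComms k g}

theorem aux_single_comm {G : Type*} [Group G] (a b : G)
    (h : b ^ 2 * a = a * b ^ 2) (n : ℕ) :
    ∃ x y : G, x⁻¹ * y⁻¹ * x * y = (a⁻¹ * b⁻¹ * a * b) ^ n := by
  set c := a⁻¹ * b⁻¹ * a * b with hc
  have h' : a * (b * b) = b * b * a := by
    have := h.symm
    simpa [pow_two, mul_assoc] using this
  have key : c * b = b * c⁻¹ := by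
    simp only [hc, mul_inv_rev, inv_inv]
    rw [show a⁻¹ * b⁻¹ * a * b * b = a⁻¹ * b⁻¹ * (a * (b * b)) by group, h']
    group
  have key2 : b⁻¹ * c * b = c⁻¹ := by
    rw [mul_assoc, key]; group
  have hconj : ∀ m : ℤ, b⁻¹ * c ^ m * b = c ^ (-m) := by
    intro m
    have : (b⁻¹ * c * b⁻¹⁻¹) ^ m = b⁻¹ * c ^ m * b⁻¹⁻¹ := conj_zpow ..
    rw [inv_inv] at this
    rw [← this, key2, inv_zpow, ← zpow_neg]
  have main : ∀ m : ℤ, ∃ x y : G, x⁻¹ * y⁻¹ * x * y = c ^ m := by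
    intro m
    rcases Int.even_or_odd m with ⟨k, hk⟩ | ⟨k, hk⟩
    · refine ⟨c ^ (-k), b, ?_⟩
      have : (c ^ (-k))⁻¹ * b⁻¹ * c ^ (-k) * b = c ^ k * (b⁻¹ * c ^ (-k) * b) := by
        group
      rw [this, hconj, neg_neg, ← zpow_add, hk]
    · refine ⟨a * c ^ (-k), b, ?_⟩
      have : (a * c ^ (-k))⁻¹ * b⁻¹ * (a * c ^ (-k)) * b =
          c ^ k * (a⁻¹ * b⁻¹ * a * b) * (b⁻¹ * c ^ (-k) * b) := by
        group
      rw [this, hconj, neg_neg, ← hc]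
      rw [show c ^ k * c * c ^ k = c ^ (2 * k + 1) by
        rw [two_mul, zpow_add, zpow_add, zpow_one]; group]
      rw [hk]
  obtain ⟨x, y, hxy⟩ := main (n : ℤ)
  exact ⟨x, y, by rw [hxy, zpow_natCast]⟩

/-- If `b²a = ab²`, then every power `[a,b]ⁿ` (`n ≥ 1`) has commutator length at
most `1`, where `[x,y] = x⁻¹y⁻¹xy`. -/
theorem cl_comm_pow_le_one {G : Type*} [Group G] (a b : G)
    (h : b ^ 2 * a = a * b ^ 2) (n : ℕ) (hn : 1 ≤ n) :
    cl ((a⁻¹ * b⁻¹ * a * b) ^ n) ≤ 1 := by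
  obtain ⟨x, y, hxy⟩ := aux_single_comm a b h n
  exact sInf_le ⟨1, rfl, [(x, y)], rfl, by simpa using hxy⟩
end

section
/- Let A * B be the free product of groups A and B, let b ∈ B have order > 2, and let w_b: A*B → ℤ be defined by w_b(x) = (x,b) - (x,b⁻¹), counting occurrences of b and b⁻¹ in the reduced form of x. Then for any x ∈ A*B that is a product of k commutators [xᵢ,yᵢ] with xᵢ, yᵢ ∈ A*B, one has |w_b(x)| ≤ 12k - 3. -/
open Monoid

/-- The Rhemtulla function `w_b` on a free product: `w_b(x)` is the number of
occurrences of the letter `b` in the reduced form of `x` minus the number of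
occurrences of `b⁻¹`. -/
noncomputable def rhemtulla {G : Bool → Type*} [∀ i, Group (G i)]
    [∀ i, DecidableEq (G i)] (b : G true) (x : CoprodI G) : ℤ :=
  ((CoprodI.Word.equiv x).toList.count ⟨true, b⟩ : ℤ) -
    ((CoprodI.Word.equiv x).toList.count ⟨true, b⁻¹⟩ : ℤ)

namespace RhemAux

open CoprodI

section General

variable {ι : Type*} [DecidableEq ι] {M : ι → Type*} [∀ i, Monoid (M i)] [∀ i, DecidableEq (M i)]

theorem toList_of_smul {i : ι} (m : M i) (W : Word M) (h1 : W.fstIdx ≠ some i) (h2 : m ≠ 1) :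
    (CoprodI.of m • W).toList = ⟨i, m⟩ :: W.toList := by
  rw [← Word.cons_eq_smul (h1 := h1) (h2 := h2)]
  rfl

/-- no-cancellation lemma -/
theorem toList_prod_smul (X : Word M) : ∀ (W : Word M),
    (∀ l ∈ X.toList.getLast?, W.fstIdx ≠ some l.1) →
    ((Word.prod X) • W).toList = X.toList ++ W.toList := by
  induction X using Word.consRecOn with
  | empty => intro W _; simp [Word.prod]
  | cons j m X' h1 h2 ih =>
    intro W h
    have h' : ∀ l ∈ (⟨j, m⟩ :: X'.toList : List (Σ i, M i)).getLast?, W.fstIdx ≠ some l.1 := h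
    have hX' : ∀ l ∈ X'.toList.getLast?, W.fstIdx ≠ some l.1 := by
      rcases hnil : X'.toList with _ | ⟨a, t⟩
      · simp
      · intro l hl
        exact h' l (by rw [hnil, List.getLast?_cons_cons]; exact hl)
    have hlist : (X'.prod • W).toList = X'.toList ++ W.toList := ih W hX'
    have hfst : Word.fstIdx (X'.prod • W) ≠ some j := by
      unfold Word.fstIdx
      rw [hlist]
      rcases hnil : X'.toList with _ | ⟨a, t⟩
      · have := h' ⟨j, m⟩ (by simp [hnil])
        simpa [Word.fstIdx] using this
      · have ha : a.1 ≠ j := by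
          have h1' := h1
          unfold Word.fstIdx at h1'
          rw [hnil] at h1'
          simpa using h1'
        simpa using ha
    rw [Word.prod_cons, mul_smul, toList_of_smul m _ hfst h2, hlist]
    rfl

theorem prod_equiv (x : CoprodI M) : Word.prod (Word.equiv x) = x :=
  (Word.equiv).symm_apply_apply x

theorem equiv_prod (W : Word M) : Word.equiv (Word.prod W) = W :=
  (Word.equiv).apply_symm_apply W

/-- the word for the tail of a word -/
def tailWord (W : Word M) : Word M where
  toList := W.toList.tail
  ne_one := fun l hl => W.ne_one l (List.mem_of_mem_tail hl)
  chain_ne := W.chain_ne.tail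

/-- the word dropping the last letter -/
def dropLastWord (W : Word M) : Word M where
  toList := W.toList.dropLast
  ne_one := fun l hl => W.ne_one l ((List.dropLast_prefix W.toList).subset hl)
  chain_ne := W.chain_ne.prefix (List.dropLast_prefix W.toList)

end General

section Groups

variable {G : Bool → Type*} [∀ i, Group (G i)] [∀ i, DecidableEq (G i)] (b : G true)

/-- letter-inverting map -/
theorem equiv_inv_toList (W : Word G) :
    (Word.equiv ((Word.prod W)⁻¹)).toList
      = (W.toList.map fun l => (⟨l.1, l.2⁻¹⟩ : Σ i, G i)).reverse := by
  induction W using Word.consRecOn with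
  | empty =>
    simp only [Word.empty_toList, List.map_nil, List.reverse_nil]
    rw [show Word.prod (Word.empty : Word G) = 1 from rfl, inv_one]
    rfl
  | cons j m W' h1 h2 ih =>
    have hm1 : m⁻¹ ≠ 1 := by simpa using h2
    have hsingle : (CoprodI.of m⁻¹ • (Word.empty : Word G)).toList = [⟨j, m⁻¹⟩] := by
      rw [toList_of_smul m⁻¹ Word.empty (by simp [Word.fstIdx, Word.empty]) hm1]
      rfl
    have key : Word.equiv ((Word.prod (Word.cons m W' h1 h2))⁻¹)
        = (Word.prod W')⁻¹ • (CoprodI.of m⁻¹ • (Word.empty : Word G)) := by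
      rw [Word.prod_cons, mul_inv_rev, ← map_inv]
      calc Word.equiv ((Word.prod W')⁻¹ * CoprodI.of m⁻¹)
          = ((Word.prod W')⁻¹ * CoprodI.of m⁻¹) • (Word.empty : Word G) := rfl
        _ = (Word.prod W')⁻¹ • (CoprodI.of m⁻¹ • (Word.empty : Word G)) := mul_smul _ _ _
    have hcond : ∀ l ∈ (Word.equiv ((Word.prod W')⁻¹)).toList.getLast?,
        (CoprodI.of m⁻¹ • (Word.empty : Word G)).fstIdx ≠ some l.1 := by
      intro l hl
      rw [ih, List.getLast?_reverse] at hl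
      rcases hnil : W'.toList with _ | ⟨a, t⟩
      · rw [hnil] at hl; simp at hl
      · rw [hnil] at hl
        simp only [List.map_cons, List.head?_cons, Option.mem_def, Option.some.injEq] at hl
        subst hl
        have ha : a.1 ≠ j := by
          have h1' := h1
          unfold Word.fstIdx at h1'
          rw [hnil] at h1'
          simpa using h1'
        unfold Word.fstIdx
        rw [hsingle]
        simpa using Ne.symm ha
    rw [key, ← prod_equiv ((Word.prod W')⁻¹), toList_prod_smul _ _ hcond]
    rw [ih, hsingle]
    simp [Word.cons]

/-- The letter-counting function. -/
def cntL (L : List (Σ i, G i)) : ℤ :=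
  (L.count ⟨true, b⟩ : ℤ) - (L.count ⟨true, b⁻¹⟩ : ℤ)

theorem cntL_append (L₁ L₂ : List (Σ i, G i)) :
    cntL b (L₁ ++ L₂) = cntL b L₁ + cntL b L₂ := by
  simp [cntL, List.count_append]; ring

theorem cntL_cons (l : Σ i, G i) (L : List (Σ i, G i)) :
    cntL b (l :: L) = cntL b [l] + cntL b L := by
  rw [show l :: L = [l] ++ L from rfl, cntL_append]

theorem abs_cntL_single (l : Σ i, G i) : |cntL b [l]| ≤ 1 := by
  have h1 : ([l] : List (Σ i, G i)).count ⟨true, b⟩ ≤ 1 := List.count_le_length.trans (by simp)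
  have h2 : ([l] : List (Σ i, G i)).count ⟨true, b⁻¹⟩ ≤ 1 :=
    List.count_le_length.trans (by simp)
  rw [abs_le, cntL]
  omega

theorem cntL_inv_single (i : Bool) (u : G i) :
    cntL b [⟨i, u⁻¹⟩] = - cntL b [⟨i, u⟩] := by
  cases i
  · simp [cntL, List.count_singleton']
  · simp only [cntL, List.count_singleton']
    have e1 : ((⟨true, u⁻¹⟩ : Σ i, G i) = ⟨true, b⟩) ↔ u = b⁻¹ := by
      simp [inv_eq_iff_eq_inv]
    have e2 : ((⟨true, u⁻¹⟩ : Σ i, G i) = ⟨true, b⁻¹⟩) ↔ u = b := by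
      simp [inv_inj, inv_eq_iff_eq_inv]
    have e3 : ((⟨true, u⟩ : Σ i, G i) = ⟨true, b⟩) ↔ u = b := by simp
    have e4 : ((⟨true, u⟩ : Σ i, G i) = ⟨true, b⁻¹⟩) ↔ u = b⁻¹ := by simp
    rw [if_congr e1 rfl rfl, if_congr e2 rfl rfl, if_congr e3 rfl rfl, if_congr e4 rfl rfl]
    by_cases hub : u = b <;> by_cases hub' : u = b⁻¹ <;> simp [hub, hub']


theorem cntL_nil : cntL b ([] : List (Σ i, G i)) = 0 := by simp [cntL]

theorem caseA (b : G true) (x : CoprodI G) (W : Word G)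
    (h : ∀ l ∈ (Word.equiv x).toList.getLast?, W.fstIdx ≠ some l.1) :
    cntL b ((x • W).toList) = cntL b ((Word.equiv x).toList) + cntL b W.toList := by
  have h2 := toList_prod_smul (Word.equiv x) W h
  rw [prod_equiv] at h2
  rw [h2, cntL_append]

theorem main (b : G true) : ∀ (n : ℕ), ∀ (x : CoprodI G) (W : Word G),
    (Word.equiv x).toList.length ≤ n →
    |cntL b ((x • W).toList) - cntL b ((Word.equiv x).toList) - cntL b W.toList| ≤ 3 := by
  intro n
  induction n with
  | zero =>
    intro x W hlen
    have hnil : (Word.equiv x).toList = [] := List.length_eq_zero_iff.mp (Nat.le_zero.mp hlen)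
    rw [caseA b x W (by rw [hnil]; simp)]
    simp
  | succ n ih =>
    intro x W hlen
    by_cases h : ∀ l ∈ (Word.equiv x).toList.getLast?, W.fstIdx ≠ some l.1
    · rw [caseA b x W h]; simp
    · push_neg at h
      obtain ⟨⟨i, u⟩, hl, hfst⟩ := h
      -- decompose the word of x
      have hne : (Word.equiv x).toList ≠ [] := by
        intro hnil; rw [hnil] at hl; simp at hl
      have hlast : (Word.equiv x).toList.getLast hne = ⟨i, u⟩ := by
        have h1 := List.getLast?_eq_getLast hne
        rw [Option.mem_def, h1] at hl
        exact Option.some_injective _ hl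
      have hL' : (Word.equiv x).toList
          = (Word.equiv x).toList.dropLast ++ [⟨i, u⟩] := by
        conv_lhs => rw [← List.dropLast_append_getLast hne]
        rw [hlast]
      set X' : Word G := dropLastWord (Word.equiv x) with hX'
      have hX'list : X'.toList = (Word.equiv x).toList.dropLast := rfl
      have hxdec : x = Word.prod X' * CoprodI.of u := by
        conv_lhs => rw [← prod_equiv x]
        show ((Word.equiv x).toList.map fun l => CoprodI.of l.2).prod = _
        rw [hL', List.map_append, List.prod_append]
        rfl
      have hcntx : cntL b (Word.equiv x).toList
          = cntL b X'.toList + cntL b [⟨i, u⟩] := by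
        rw [hX'list, ← cntL_append, ← hL']
      -- decompose W
      have hWne : W.toList ≠ [] := by
        intro hnil
        rw [show W.fstIdx = W.toList.head?.map Sigma.fst from rfl, hnil] at hfst
        simp at hfst
      obtain ⟨⟨i', v⟩, T, hWlist⟩ : ∃ a t, W.toList = a :: t :=
        List.exists_cons_of_ne_nil hWne
      have hii' : i = i' := by
        have hf := hfst
        rw [show W.fstIdx = W.toList.head?.map Sigma.fst from rfl, hWlist] at hf
        simpa using hf.symm
      subst hii'
      have hTlist : (tailWord W).toList = T := by
        show W.toList.tail = T
        rw [hWlist]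
        rfl
      have hWfst1 : (tailWord W).fstIdx ≠ some i := by
        have hch := W.chain_ne
        rw [hWlist] at hch
        have hhead := (List.isChain_cons.mp hch).1
        intro hcontra
        rw [show (tailWord W).fstIdx = (tailWord W).toList.head?.map Sigma.fst from rfl,
          hTlist] at hcontra
        rcases hT : T with _ | ⟨a, t⟩
        · rw [hT] at hcontra; simp at hcontra
        · rw [hT] at hcontra
          simp only [List.head?_cons, Option.map_some] at hcontra
          have ha : (⟨i, v⟩ : Σ i, G i).1 ≠ a.1 := hhead a (by rw [hT]; simp)
          exact ha (Option.some_injective _ hcontra).symm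
      have hv1 : v ≠ 1 := W.ne_one ⟨i, v⟩ (by rw [hWlist]; simp)
      have hWeq : W = CoprodI.of v • tailWord W := by
        rw [← Word.cons_eq_smul (h1 := hWfst1) (h2 := hv1)]
        apply Word.ext
        show W.toList = ⟨i, v⟩ :: (tailWord W).toList
        rw [hWlist, hTlist]
      have hcntW : cntL b W.toList = cntL b [⟨i, v⟩] + cntL b (tailWord W).toList := by
        rw [hWlist, hTlist, cntL_cons]
      have hsmul : x • W = Word.prod X' • (CoprodI.of (u * v) • tailWord W) := by
        conv_lhs => rw [hxdec, hWeq]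
        rw [mul_smul, ← mul_smul (CoprodI.of u), ← MonoidHom.map_mul]
      by_cases huv : u * v = 1
      · -- cancellation case
        have hxw : x • W = Word.prod X' • tailWord W := by
          rw [hsmul, huv, MonoidHom.map_one, one_smul]
        have hlen' : (Word.equiv (Word.prod X')).toList.length ≤ n := by
          rw [equiv_prod, hX'list, List.length_dropLast]
          omega
        have hIH := ih (Word.prod X') (tailWord W) hlen'
        rw [equiv_prod] at hIH
        have hv : v = u⁻¹ := (mul_eq_one_iff_inv_eq.mp huv).symm
        have hδ : cntL b [⟨i, v⟩] = - cntL b [⟨i, u⟩] := by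
          rw [hv]; exact cntL_inv_single b i u
        have heq : cntL b ((x • W).toList) - cntL b ((Word.equiv x).toList)
              - cntL b W.toList
            = cntL b ((Word.prod X' • tailWord W).toList) - cntL b X'.toList
              - cntL b (tailWord W).toList := by
          rw [hxw, hcntx, hcntW, hδ]; ring
        rw [heq]; exact hIH
      · -- amalgamation case
        have hlist2 : (CoprodI.of (u * v) • tailWord W).toList
            = ⟨i, u * v⟩ :: (tailWord W).toList := toList_of_smul _ _ hWfst1 huv
        have hcond : ∀ l' ∈ X'.toList.getLast?,
            (CoprodI.of (u * v) • tailWord W).fstIdx ≠ some l'.1 := by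
          intro l' hl'
          have hch : List.Chain' (fun l l' : Σ i, G i => l.1 ≠ l'.1)
              ((Word.equiv x).toList.dropLast ++ [⟨i, u⟩]) := hL' ▸ (Word.equiv x).chain_ne
          have hchain := (List.isChain_append.mp hch).2.2 l' (by rwa [← hX'list]) ⟨i, u⟩ (by simp)
          rw [show (CoprodI.of (u * v) • tailWord W).fstIdx
            = (CoprodI.of (u * v) • tailWord W).toList.head?.map Sigma.fst from rfl, hlist2]
          simpa using Ne.symm hchain
        have hbig : (x • W).toList = X'.toList ++ (⟨i, u * v⟩ :: (tailWord W).toList) := by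
          rw [hsmul, toList_prod_smul _ _ hcond, hlist2]
        have heq : cntL b ((x • W).toList) - cntL b ((Word.equiv x).toList)
              - cntL b W.toList
            = cntL b [⟨i, u * v⟩] - cntL b [⟨i, u⟩] - cntL b [⟨i, v⟩] := by
          rw [hbig, cntL_append, cntL_cons, hcntx, hcntW]; ring
        rw [heq]
        have b1 := abs_le.mp (abs_cntL_single b ⟨i, u * v⟩)
        have b2 := abs_le.mp (abs_cntL_single b ⟨i, u⟩)
        have b3 := abs_le.mp (abs_cntL_single b ⟨i, v⟩)
        rw [abs_le]
        constructor <;> linarith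

theorem rhem_eq (x : CoprodI G) : rhemtulla b x = cntL b (Word.equiv x).toList := rfl

theorem rhem_defect (x y : CoprodI G) :
    |rhemtulla b (x * y) - rhemtulla b x - rhemtulla b y| ≤ 3 := by
  have hxy : Word.equiv (x * y) = x • Word.equiv y := by
    show (x * y) • (Word.empty : Word G) = x • (y • (Word.empty : Word G))
    rw [mul_smul]
  have hmain := main b ((Word.equiv x).toList.length) x (Word.equiv y) le_rfl
  rw [rhem_eq, rhem_eq, rhem_eq, hxy]
  exact hmain

theorem rhem_inv (x : CoprodI G) : rhemtulla b x⁻¹ = - rhemtulla b x := by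
  have h := equiv_inv_toList (Word.equiv x)
  rw [prod_equiv] at h
  rw [rhem_eq, rhem_eq, h]
  set σ : (Σ i, G i) → (Σ i, G i) := fun l => ⟨l.1, l.2⁻¹⟩ with hσ
  have hinj : Function.Injective σ := by
    rintro ⟨i, a⟩ ⟨j, c⟩ hac
    have hij : i = j := congrArg Sigma.fst hac
    subst hij
    have h2 : a⁻¹ = c⁻¹ := by simpa [hσ] using hac
    simp [inv_injective h2]
  have h1 : ((⟨true, b⟩ : Σ i, G i)) = σ ⟨true, b⁻¹⟩ := by simp [hσ]
  have h2 : ((⟨true, b⁻¹⟩ : Σ i, G i)) = σ ⟨true, b⟩ := by simp [hσ]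
  unfold cntL
  rw [List.count_reverse, List.count_reverse]
  have c1 : List.count ⟨true, b⟩ ((Word.equiv x).toList.map σ)
      = List.count ⟨true, b⁻¹⟩ (Word.equiv x).toList := by
    rw [h1]; exact List.count_map_of_injective _ σ hinj _
  have c2 : List.count ⟨true, b⁻¹⟩ ((Word.equiv x).toList.map σ)
      = List.count ⟨true, b⟩ (Word.equiv x).toList := by
    rw [h2]; exact List.count_map_of_injective _ σ hinj _
  rw [c1, c2]
  ring

theorem rhem_comm (x y : CoprodI G) :
    |rhemtulla b (x⁻¹ * y⁻¹ * x * y)| ≤ 9 := by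
  have d1 := rhem_defect b (x⁻¹ * y⁻¹ * x) y
  have d2 := rhem_defect b (x⁻¹ * y⁻¹) x
  have d3 := rhem_defect b x⁻¹ y⁻¹
  have i1 := rhem_inv b x
  have i2 := rhem_inv b y
  rw [abs_le] at d1 d2 d3 ⊢
  constructor <;> linarith [d1.1, d1.2, d2.1, d2.2, d3.1, d3.2]


theorem prod_bound (b : G true) : ∀ (l : List (CoprodI G × CoprodI G)), l ≠ [] →
    |rhemtulla b ((l.map fun p => p.1⁻¹ * p.2⁻¹ * p.1 * p.2).prod)| ≤ 12 * (l.length : ℤ) - 3 := by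
  intro l
  induction l with
  | nil => intro h; exact absurd rfl h
  | cons p t ih =>
    intro _
    rcases eq_or_ne t [] with rfl | ht
    · have := rhem_comm b p.1 p.2
      simp only [List.map_cons, List.map_nil, List.prod_cons, List.prod_nil, mul_one,
        List.length_cons, List.length_nil]
      norm_num
      linarith [abs_le.mp this]
    · have h1 := rhem_comm b p.1 p.2
      have h2 := ih ht
      have h3 := rhem_defect b (p.1⁻¹ * p.2⁻¹ * p.1 * p.2)
        ((t.map fun p => p.1⁻¹ * p.2⁻¹ * p.1 * p.2).prod)
      rw [List.map_cons, List.prod_cons]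
      have hlen : ((p :: t).length : ℤ) = (t.length : ℤ) + 1 := by push_cast [List.length_cons]; ring
      rw [hlen, abs_le]
      rw [abs_le] at h1 h2 h3
      constructor <;> linarith [h1.1, h1.2, h2.1, h2.2, h3.1, h3.2]

end Groups

end RhemAux

/-- If `x` is a product of `k ≥ 1` commutators in the free product, then
`|w_b(x)| ≤ 12k - 3`, for `b` of order greater than `2`. -/
theorem rhemtulla_prod_comms_bound {G : Bool → Type*} [∀ i, Group (G i)]
    [∀ i, DecidableEq (G i)] (b : G true) (hb : b ^ 2 ≠ 1)
    (k : ℕ) (hk : 1 ≤ k) (x : CoprodI G)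
    (l : List (CoprodI G × CoprodI G)) (hl : l.length = k)
    (hx : (l.map fun p => p.1⁻¹ * p.2⁻¹ * p.1 * p.2).prod = x) :
    |rhemtulla b x| ≤ 12 * (k : ℤ) - 3 := by
  subst hx
  subst hl
  apply RhemAux.prod_bound
  intro h
  rw [h] at hk
  simp at hk
end

section
/- Let A * B be the free product of groups A and B, and let a ∈ A and b ∈ B be elements of order > 2. Then the commutator lengths of the powers [ab, ba]ⁿ, n ∈ ℕ, are unbounded: sup{cl([ab,ba]ⁿ) : n ∈ ℕ} = ∞. -/
open Monoid CoprodI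

set_option linter.unusedSectionVars false

section QM

variable {ι : Type*} [DecidableEq ι] {M : ι → Type*} [∀ i, Group (M i)]
  [∀ i, DecidableEq (M i)]

def listProd (l : List (Σ i, M i)) : CoprodI M := (l.map fun s => CoprodI.of s.2).prod

@[simp] lemma listProd_nil : listProd ([] : List (Σ i, M i)) = 1 := rfl

@[simp] lemma listProd_cons (x : (Σ i, M i)) (l : List (Σ i, M i)) :
    listProd (x :: l) = CoprodI.of x.2 * listProd l := by
  simp [listProd]

@[simp] lemma listProd_append (l₁ l₂ : List (Σ i, M i)) :
    listProd (l₁ ++ l₂) = listProd l₁ * listProd l₂ := by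
  simp [listProd]

/-- Multiply (reverse of `u`) with `v`, performing free-product cancellation. -/
def mulRev : List (Σ i, M i) → List (Σ i, M i) → List (Σ i, M i)
  | [], v => v
  | x :: u, [] => (x :: u).reverse
  | x :: u, y :: v =>
    if h : x.1 = y.1 then
      if (h ▸ x.2) * y.2 = 1 then mulRev u v
      else u.reverse ++ ⟨y.1, (h ▸ x.2) * y.2⟩ :: v
    else u.reverse ++ x :: y :: v

lemma mulRev_nil (v : List (Σ i, M i)) : mulRev [] v = v := by simp [mulRev]

lemma mulRev_nil' (x : (Σ i, M i)) (u : List (Σ i, M i)) :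
    mulRev (x :: u) [] = (x :: u).reverse := by simp [mulRev]

lemma mulRev_cancel {i : ι} (gx gy : M i) (u v : List (Σ i, M i)) (hc : gx * gy = 1) :
    mulRev (⟨i, gx⟩ :: u) (⟨i, gy⟩ :: v) = mulRev u v := by
  rw [mulRev, dif_pos rfl, if_pos hc]

lemma mulRev_merge {i : ι} (gx gy : M i) (u v : List (Σ i, M i)) (hc : gx * gy ≠ 1) :
    mulRev (⟨i, gx⟩ :: u) (⟨i, gy⟩ :: v) = u.reverse ++ ⟨i, gx * gy⟩ :: v := by
  rw [mulRev, dif_pos rfl, if_neg hc]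

lemma mulRev_sep {i j : ι} (h : i ≠ j) (gx : M i) (gy : M j) (u v : List (Σ i, M i)) :
    mulRev (⟨i, gx⟩ :: u) (⟨j, gy⟩ :: v) = u.reverse ++ ⟨i, gx⟩ :: ⟨j, gy⟩ :: v := by
  rw [mulRev, dif_neg h]

lemma listProd_mulRev (u v : List (Σ i, M i)) :
    listProd (mulRev u v) = listProd u.reverse * listProd v := by
  induction u generalizing v with
  | nil => simp [mulRev_nil]
  | cons x u ih =>
    cases v with
    | nil => simp [mulRev_nil']
    | cons y v =>
      obtain ⟨i, gx⟩ := x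
      obtain ⟨j, gy⟩ := y
      by_cases h : i = j
      · subst h
        by_cases hc : gx * gy = 1
        · have h1 : ∀ z : CoprodI M, CoprodI.of gx * (CoprodI.of gy * z) = z := by
            intro z; rw [← mul_assoc, ← map_mul, hc, map_one, one_mul]
          rw [mulRev_cancel gx gy u v hc, ih]
          simp [mul_assoc, h1]
        · rw [mulRev_merge gx gy u v hc]
          simp [map_mul, mul_assoc]
      · rw [mulRev_sep h gx gy u v]
        simp [mul_assoc]



section Valid

/-- Valid reduced-word lists. -/
def OkL (l : List (Σ i, M i)) : Prop :=
  (∀ s ∈ l, s.2 ≠ 1) ∧ l.Chain' (fun s t => s.1 ≠ t.1)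

lemma okL_nil : OkL ([] : List (Σ i, M i)) := ⟨by simp, List.isChain_nil⟩

lemma OkL.reverse {l : List (Σ i, M i)} (h : OkL l) : OkL l.reverse := by
  refine ⟨fun s hs => h.1 s (List.mem_reverse.1 hs), ?_⟩
  show List.IsChain _ l.reverse
  rw [List.isChain_reverse]
  exact h.2.imp fun _ _ hab => Ne.symm hab

lemma OkL.tail_cons {x : (Σ i, M i)} {l : List (Σ i, M i)} (h : OkL (x :: l)) : OkL l :=
  ⟨fun s hs => h.1 s (List.mem_cons_of_mem _ hs), (List.isChain_cons.1 h.2).2⟩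

lemma okL_mulRev {u v : List (Σ i, M i)} (hu : OkL u) (hv : OkL v) : OkL (mulRev u v) := by
  induction u generalizing v with
  | nil => rw [mulRev_nil]; exact hv
  | cons x u ih =>
    cases v with
    | nil => rw [mulRev_nil']; exact hu.reverse
    | cons y v =>
      obtain ⟨i, gx⟩ := x
      obtain ⟨j, gy⟩ := y
      have hxu : ∀ s ∈ u.head?, s.1 ≠ i := by
        intro s hs
        exact Ne.symm ((List.isChain_cons.1 hu.2).1 s hs)
      have hyv : ∀ s ∈ v.head?, (j : ι) ≠ s.1 := (List.isChain_cons.1 hv.2).1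
      by_cases h : i = j
      · subst h
        by_cases hc : gx * gy = 1
        · rw [mulRev_cancel gx gy u v hc]
          exact ih hu.tail_cons hv.tail_cons
        · rw [mulRev_merge gx gy u v hc]
          constructor
          · intro s hs
            rcases List.mem_append.1 hs with hs | hs
            · exact hu.tail_cons.1 s (List.mem_reverse.1 hs)
            · rcases List.mem_cons.1 hs with rfl | hs
              · exact hc
              · exact hv.tail_cons.1 s hs
          · refine List.isChain_append.2 ⟨hu.tail_cons.reverse.2, ?_, ?_⟩
            · exact List.isChain_cons.2 ⟨fun s hs => hyv s hs, hv.tail_cons.2⟩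
            · intro s hs t ht
              rw [List.getLast?_reverse] at hs
              rw [List.head?_cons, Option.mem_some_iff] at ht
              subst ht
              exact hxu s hs
      · rw [mulRev_sep h gx gy u v]
        constructor
        · intro s hs
          rcases List.mem_append.1 hs with hs | hs
          · exact hu.tail_cons.1 s (List.mem_reverse.1 hs)
          · rcases List.mem_cons.1 hs with rfl | hs
            · exact hu.1 _ (List.mem_cons_self)
            · rcases List.mem_cons.1 hs with rfl | hs
              · exact hv.1 _ (List.mem_cons_self)
              · exact hv.tail_cons.1 s hs
        · refine List.isChain_append.2 ⟨hu.tail_cons.reverse.2, ?_, ?_⟩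
          · exact List.isChain_cons_cons.2 ⟨h, List.isChain_cons.2 ⟨fun s hs => hyv s hs, hv.tail_cons.2⟩⟩
          · intro s hs t ht
            rw [List.getLast?_reverse] at hs
            rw [List.head?_cons, Option.mem_some_iff] at ht
            subst ht
            exact hxu s hs

end Valid

section Fsum

variable (lam : (Σ i, M i) → ℤ)

def fsum (l : List (Σ i, M i)) : ℤ := (l.map lam).sum

@[simp] lemma fsum_nil : fsum lam ([] : List (Σ i, M i)) = 0 := rfl

@[simp] lemma fsum_cons (x : (Σ i, M i)) (l : List (Σ i, M i)) :
    fsum lam (x :: l) = lam x + fsum lam l := by simp [fsum]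

@[simp] lemma fsum_append (l₁ l₂ : List (Σ i, M i)) :
    fsum lam (l₁ ++ l₂) = fsum lam l₁ + fsum lam l₂ := by simp [fsum]

@[simp] lemma fsum_reverse (l : List (Σ i, M i)) : fsum lam l.reverse = fsum lam l := by
  induction l with
  | nil => rfl
  | cons x l ih => simp [ih, add_comm]

variable (hodd : ∀ (i : ι) (g h : M i), g * h = 1 → lam ⟨i, g⟩ + lam ⟨i, h⟩ = 0)
variable (hbd : ∀ s, |lam s| ≤ 1)

include hodd hbd in
lemma abs_fsum_mulRev (u v : List (Σ i, M i)) :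
    |fsum lam (mulRev u v) - fsum lam u - fsum lam v| ≤ 3 := by
  induction u generalizing v with
  | nil => simp [mulRev_nil]
  | cons x u ih =>
    cases v with
    | nil =>
      rw [mulRev_nil']
      simp only [fsum_reverse, fsum_cons, fsum_nil, sub_zero, sub_self, abs_zero]
      norm_num
    | cons y v =>
      obtain ⟨i, gx⟩ := x
      obtain ⟨j, gy⟩ := y
      by_cases h : i = j
      · subst h
        by_cases hc : gx * gy = 1
        · rw [mulRev_cancel gx gy u v hc]
          have h0 : lam ⟨i, gx⟩ + lam ⟨i, gy⟩ = 0 := hodd i gx gy hc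
          have := ih v
          rw [fsum_cons, fsum_cons]
          have heq : fsum lam (mulRev u v) - (lam ⟨i, gx⟩ + fsum lam u) -
              (lam ⟨i, gy⟩ + fsum lam v)
              = fsum lam (mulRev u v) - fsum lam u - fsum lam v := by
            rw [← sub_sub, ← sub_sub]
            ring_nf
            linarith [h0]
          rw [heq]
          exact this
        · rw [mulRev_merge gx gy u v hc]
          simp only [fsum_append, fsum_reverse, fsum_cons]
          have h1 := hbd ⟨i, gx * gy⟩
          have h2 := hbd ⟨i, gx⟩
          have h3 := hbd ⟨i, gy⟩
          rw [abs_le] at *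
          constructor <;> linarith
      · rw [mulRev_sep h gx gy u v]
        simp only [fsum_append, fsum_reverse, fsum_cons]
        rw [show fsum lam u + (lam ⟨i, gx⟩ + (lam ⟨j, gy⟩ + fsum lam v)) - (lam ⟨i, gx⟩ + fsum lam u) - (lam ⟨j, gy⟩ + fsum lam v) = 0 by ring]
        norm_num

end Fsum


section Phi

variable (lam : (Σ i, M i) → ℤ)

lemma okL_word (w : Word M) : OkL w.toList := ⟨w.ne_one, w.chain_ne⟩

lemma word_prod_eq (w : Word M) : listProd w.toList = w.prod := rfl

lemma equiv_prod (w : Word M) : Word.equiv w.prod = w :=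
  Word.equiv.apply_symm_apply w

lemma prod_equiv (g : CoprodI M) : (Word.equiv g).prod = g :=
  Word.equiv.symm_apply_apply g

noncomputable def phi (g : CoprodI M) : ℤ := fsum lam (Word.equiv g).toList

lemma phi_one : phi lam (1 : CoprodI M) = 0 := by
  have h : Word.equiv (1 : CoprodI M) = Word.empty := by
    have := equiv_prod (Word.empty : Word M)
    rwa [Word.prod_empty] at this
  rw [phi, h]
  rfl

variable (hodd : ∀ (i : ι) (g h : M i), g * h = 1 → lam ⟨i, g⟩ + lam ⟨i, h⟩ = 0)
variable (hbd : ∀ s, |lam s| ≤ 1)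

include hodd hbd in
lemma phi_defect (x y : CoprodI M) : |phi lam (x * y) - phi lam x - phi lam y| ≤ 3 := by
  set wx := Word.equiv x with hwx
  set wy := Word.equiv y with hwy
  have hok : OkL (mulRev wx.toList.reverse wy.toList) :=
    okL_mulRev (okL_word wx).reverse (okL_word wy)
  set w : Word M := ⟨mulRev wx.toList.reverse wy.toList, hok.1, hok.2⟩ with hw
  have hprod : w.prod = x * y := by
    rw [← word_prod_eq]
    show listProd (mulRev wx.toList.reverse wy.toList) = x * y
    rw [listProd_mulRev, List.reverse_reverse, word_prod_eq, word_prod_eq,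
      hwx, hwy, prod_equiv, prod_equiv]
  have heq : Word.equiv (x * y) = w := by rw [← hprod, equiv_prod]
  have hb := abs_fsum_mulRev lam hodd hbd wx.toList.reverse wy.toList
  rw [fsum_reverse] at hb
  show |fsum lam (Word.equiv (x*y)).toList - fsum lam wx.toList - fsum lam wy.toList| ≤ 3
  rw [heq]
  exact hb

include hodd hbd in
lemma phi_inv_add (x : CoprodI M) : |phi lam x + phi lam x⁻¹| ≤ 3 := by
  have := phi_defect lam hodd hbd x x⁻¹
  rw [mul_inv_cancel, phi_one] at this
  rw [show phi lam x + phi lam x⁻¹ = -(0 - phi lam x - phi lam x⁻¹) by ring, abs_neg]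
  exact this

include hodd hbd in
lemma phi_commutator (x y : CoprodI M) :
    |phi lam (x⁻¹ * y⁻¹ * x * y)| ≤ 15 := by
  have h1 := phi_defect lam hodd hbd (x⁻¹ * y⁻¹ * x) y
  have h2 := phi_defect lam hodd hbd (x⁻¹ * y⁻¹) x
  have h3 := phi_defect lam hodd hbd x⁻¹ y⁻¹
  have h4 := phi_inv_add lam hodd hbd x
  have h5 := phi_inv_add lam hodd hbd y
  rw [abs_le] at *
  constructor <;> linarith

include hodd hbd in
lemma phi_prod_comms (k : ℕ) (g : CoprodI M)
    (hg : ∃ l : List (CoprodI M × CoprodI M), l.length = k ∧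
      (l.map fun p => p.1⁻¹ * p.2⁻¹ * p.1 * p.2).prod = g) :
    |phi lam g| ≤ 18 * k := by
  obtain ⟨l, hl, hprod⟩ := hg
  induction l generalizing k g with
  | nil =>
    subst hl
    simp only [List.map_nil, List.prod_nil] at hprod
    subst hprod
    simp [phi_one]
  | cons c l ih =>
    subst hl
    simp only [List.map_cons, List.prod_cons] at hprod
    subst hprod
    have h1 := phi_defect lam hodd hbd (c.1⁻¹ * c.2⁻¹ * c.1 * c.2)
      ((l.map fun p => p.1⁻¹ * p.2⁻¹ * p.1 * p.2).prod)
    have h2 := phi_commutator lam hodd hbd c.1 c.2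
    have h3 := ih l.length _ rfl rfl
    rw [abs_le] at *
    simp only [List.length_cons] at *
    push_cast at *
    constructor <;> linarith

end Phi

end QM

section ABPart

lemma ne_one_of_sq {H : Type*} [Group H] {x : H} (hx : x ^ 2 ≠ 1) : x ≠ 1 :=
  fun h => hx (by rw [h, one_pow])

lemma ne_inv_of_sq {H : Type*} [Group H] {x : H} (hx : x ^ 2 ≠ 1) : x ≠ x⁻¹ := by
  intro h
  apply hx
  rw [pow_two]
  nth_rewrite 2 [h]
  rw [mul_inv_cancel]

variable {G : Bool → Type*} [∀ i, Group (G i)] [∀ i, DecidableEq (G i)]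

open Classical in
/-- The Rolli weight function determined by `a` and `b`. -/
noncomputable def lamAB (a : G false) (b : G true) : (Σ i : Bool, G i) → ℤ
  | ⟨false, g⟩ => if g = a then 1 else if g = a⁻¹ then -1 else 0
  | ⟨true, g⟩ => if g = b then -1 else if g = b⁻¹ then 1 else 0

open Classical in
lemma lamAB_false (a : G false) (b : G true) (g : G false) :
    lamAB a b ⟨false, g⟩ = if g = a then 1 else if g = a⁻¹ then -1 else 0 := rfl

open Classical in
lemma lamAB_true (a : G false) (b : G true) (g : G true) :
    lamAB a b ⟨true, g⟩ = if g = b then -1 else if g = b⁻¹ then 1 else 0 := rfl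

lemma lamAB_bd (a : G false) (b : G true) : ∀ s, |lamAB a b s| ≤ 1 := by
  rintro ⟨i, g⟩
  cases i
  · rw [lamAB_false]; split_ifs <;> norm_num
  · rw [lamAB_true]; split_ifs <;> norm_num

lemma lamAB_odd (a : G false) (ha : a ^ 2 ≠ 1) (b : G true) (hb : b ^ 2 ≠ 1) :
    ∀ (i : Bool) (g h : G i), g * h = 1 → lamAB a b ⟨i, g⟩ + lamAB a b ⟨i, h⟩ = 0 := by
  have ha' : a ≠ a⁻¹ := ne_inv_of_sq ha
  have hb' : b ≠ b⁻¹ := ne_inv_of_sq hb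
  intro i g h hgh
  have hh : h = g⁻¹ := eq_inv_of_mul_eq_one_right hgh
  subst hh
  cases i
  · rw [lamAB_false, lamAB_false]
    by_cases h1 : g = a
    · subst h1
      rw [if_pos rfl, if_neg (fun h : g⁻¹ = g => ha' h.symm), if_pos rfl]
      ring
    · by_cases h2 : g = a⁻¹
      · subst h2
        rw [if_neg h1, if_pos rfl, inv_inv, if_pos rfl]
        ring
      · rw [if_neg h1, if_neg h2, if_neg (fun h : g⁻¹ = a => h2 (by rw [← h, inv_inv])),
          if_neg (fun h : g⁻¹ = a⁻¹ => h1 (by rw [← inv_inv g, h, inv_inv]))]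
        ring
  · rw [lamAB_true, lamAB_true]
    by_cases h1 : g = b
    · subst h1
      rw [if_pos rfl, if_neg (fun h : g⁻¹ = g => hb' h.symm), if_pos rfl]
      ring
    · by_cases h2 : g = b⁻¹
      · subst h2
        rw [if_neg h1, if_pos rfl, inv_inv, if_pos rfl]
        ring
      · rw [if_neg h1, if_neg h2, if_neg (fun h : g⁻¹ = b => h2 (by rw [← h, inv_inv])),
          if_neg (fun h : g⁻¹ = b⁻¹ => h1 (by rw [← inv_inv g, h, inv_inv]))]
        ring

/-- The normal-form letter list of `[ab, ba]`. -/
def powL (a : G false) (b : G true) : List (Σ i : Bool, G i) :=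
  [⟨true, b⁻¹⟩, ⟨false, a⁻¹ * a⁻¹⟩, ⟨true, b⁻¹⟩, ⟨false, a⟩, ⟨true, b * b⟩, ⟨false, a⟩]

/-- The normal-form letter list of `[ab, ba]^n`. -/
def powLn (a : G false) (b : G true) : ℕ → List (Σ i : Bool, G i)
  | 0 => []
  | n + 1 => powL a b ++ powLn a b n

lemma head_powLn (a : G false) (b : G true) (n : ℕ) :
    powLn a b n = [] ∨ (powLn a b n).head? = some ⟨true, b⁻¹⟩ := by
  cases n with
  | zero => left; rfl
  | succ n => right; rfl

lemma okL_powLn (a : G false) (ha : a ^ 2 ≠ 1) (b : G true) (hb : b ^ 2 ≠ 1) (n : ℕ) :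
    OkL (powLn a b n) := by
  have ha1 : a ≠ 1 := ne_one_of_sq ha
  have hb1 : b ≠ 1 := ne_one_of_sq hb
  have haa : a⁻¹ * a⁻¹ ≠ 1 := by
    intro h
    apply ha
    rw [pow_two, ← inv_inv (a * a), mul_inv_rev, h, inv_one]
  have hbb : b * b ≠ 1 := by rw [← pow_two]; exact hb
  induction n with
  | zero => exact okL_nil
  | succ n ih =>
    rw [powLn]
    constructor
    · intro s hs
      rcases List.mem_append.1 hs with hs | hs
      · simp only [powL, List.mem_cons, List.not_mem_nil, or_false] at hs
        rcases hs with rfl | rfl | rfl | rfl | rfl | rfl <;>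
          simp_all [inv_ne_one]
      · exact ih.1 s hs
    · refine List.isChain_append.2 ⟨?_, ih.2, ?_⟩
      · simp [powL, List.isChain_cons_cons, List.isChain_singleton]
      · intro x hx y hy
        rcases head_powLn a b n with h | h
        · rw [h] at hy; simp at hy
        · rw [h, Option.mem_some_iff] at hy
          subst hy
          rw [show (powL a b).getLast? = some ⟨false, a⟩ from rfl, Option.mem_some_iff] at hx
          subst hx
          simp

lemma listProd_powL (a : G false) (b : G true) :
    listProd (powL a b) =
      (CoprodI.of a * CoprodI.of b)⁻¹ * (CoprodI.of b * CoprodI.of a)⁻¹ *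
        (CoprodI.of a * CoprodI.of b) * (CoprodI.of b * CoprodI.of a) := by
  simp only [powL, listProd_cons, listProd_nil, map_mul, map_inv, mul_inv_rev, mul_one]
  group

lemma listProd_powLn (a : G false) (b : G true) (n : ℕ) :
    listProd (powLn a b n) =
      ((CoprodI.of a * CoprodI.of b)⁻¹ * (CoprodI.of b * CoprodI.of a)⁻¹ *
        (CoprodI.of a * CoprodI.of b) * (CoprodI.of b * CoprodI.of a)) ^ n := by
  induction n with
  | zero => simp [powLn]
  | succ n ih => rw [powLn, listProd_append, ih, listProd_powL, pow_succ']

lemma fsum_powLn (a : G false) (b : G true) (n : ℕ) :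
    fsum (lamAB a b) (powLn a b n) = n * fsum (lamAB a b) (powL a b) := by
  induction n with
  | zero => simp [powLn]
  | succ n ih =>
    rw [powLn, fsum_append, ih]
    push_cast
    ring

lemma fsum_powL_ge (a : G false) (ha : a ^ 2 ≠ 1) (b : G true) (hb : b ^ 2 ≠ 1) :
    4 ≤ fsum (lamAB a b) (powL a b) := by
  have ha1 : a ≠ 1 := ne_one_of_sq ha
  have hb1 : b ≠ 1 := ne_one_of_sq hb
  have hb' : b ≠ b⁻¹ := ne_inv_of_sq hb
  have l1 : lamAB a b ⟨true, b⁻¹⟩ = 1 := by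
    rw [lamAB_true, if_neg (fun h : b⁻¹ = b => hb' h.symm), if_pos rfl]
  have l2 : lamAB a b ⟨false, a⟩ = 1 := by rw [lamAB_false, if_pos rfl]
  have l3 : 0 ≤ lamAB a b ⟨false, a⁻¹ * a⁻¹⟩ := by
    rw [lamAB_false]
    have hne : a⁻¹ * a⁻¹ ≠ a⁻¹ := by
      intro h
      have h9 : a⁻¹ = 1 := mul_right_cancel (b := a⁻¹) (by rw [one_mul]; exact h)
      exact ha1 (by rw [← inv_inv a, h9, inv_one])
    split_ifs <;> simp_all
  have l4 : 0 ≤ lamAB a b ⟨true, b * b⟩ := by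
    rw [lamAB_true]
    have hne : b * b ≠ b := by
      intro h
      exact hb1 (mul_right_cancel (b := b) (by rw [one_mul]; exact h))
    split_ifs <;> simp_all
  simp only [powL, fsum_cons, fsum_nil]
  linarith

end ABPart

open Monoid

/-- In a free product `A * B` with `a ∈ A`, `b ∈ B` of order greater than `2`,
the commutator lengths of the powers `[ab, ba]ⁿ` are unbounded. -/
theorem cl_comm_ab_ba_pow_unbounded {G : Bool → Type*} [∀ i, Group (G i)]
    (a : G false) (ha : a ^ 2 ≠ 1) (b : G true) (hb : b ^ 2 ≠ 1) :
    (⨆ n : ℕ, cl (((CoprodI.of a * CoprodI.of b)⁻¹ * (CoprodI.of b * CoprodI.of a)⁻¹ *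
      (CoprodI.of a * CoprodI.of b) * (CoprodI.of b * CoprodI.of a)) ^ n)) = ⊤ := by
  letI : ∀ i, DecidableEq (G i) := fun i => Classical.decEq _
  set g0 : CoprodI G := (CoprodI.of a * CoprodI.of b)⁻¹ * (CoprodI.of b * CoprodI.of a)⁻¹ *
      (CoprodI.of a * CoprodI.of b) * (CoprodI.of b * CoprodI.of a) with hg0
  have key : ∀ n k : ℕ, IsProdOfNComms k (g0 ^ n) → (4 : ℤ) * n ≤ 18 * k := by
    intro n k hk
    have hok := okL_powLn a ha b hb n
    set w : Word G := ⟨powLn a b n, hok.1, hok.2⟩ with hw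
    have hwp : w.prod = g0 ^ n := by
      rw [← word_prod_eq]
      exact listProd_powLn a b n
    have heq : Word.equiv (g0 ^ n) = w := by rw [← hwp, equiv_prod]
    have hphi : phi (lamAB a b) (g0 ^ n) = (n : ℤ) * fsum (lamAB a b) (powL a b) := by
      rw [phi, heq]
      exact fsum_powLn a b n
    have hb18 := phi_prod_comms (lamAB a b) (lamAB_odd a ha b hb) (lamAB_bd a b) k (g0 ^ n) hk
    have h4 := fsum_powL_ge a ha b hb
    rw [hphi, abs_le] at hb18
    have hn0 : (0 : ℤ) ≤ (n : ℤ) := Int.natCast_nonneg n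
    nlinarith [hb18.2, h4, hn0]
  rw [iSup_eq_top]
  intro c hc
  lift c to ℕ using hc.ne
  refine ⟨5 * (c + 1), ?_⟩
  have hle : ((c : ℕ∞) + 1) ≤ cl (g0 ^ (5 * (c + 1))) := by
    apply le_sInf
    rintro x ⟨k, rfl, hk⟩
    have h1 := key (5 * (c + 1)) k hk
    have h2 : c + 1 ≤ k := by
      by_contra h
      push_neg at h
      have : (k : ℤ) ≤ (c : ℤ) := by exact_mod_cast Nat.lt_succ_iff.1 h
      push_cast at h1
      nlinarith
    have h3 : ((c + 1 : ℕ) : ℕ∞) ≤ (k : ℕ∞) := Nat.cast_le.2 h2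
    push_cast at h3
    exact h3
  have hlt : (c : ℕ∞) < (c : ℕ∞) + 1 :=
    (ENat.lt_add_one_iff (by exact_mod_cast WithTop.coe_ne_top)).2 (le_refl _)
  exact lt_of_lt_of_le hlt hle
end

section
/- Let A*B be the free product of groups A and B, b ∈ B of order > 2, and w_b the Rhemtulla function. Then for any x, y ∈ A*B, |w_b(xy)| ≤ |w_b(x)| + |w_b(y)| + 3. -/
open Monoid

section RhemAuxSection
open Monoid CoprodI CoprodI.Word List

set_option linter.unusedSectionVars false
namespace RhemAux

variable {ι : Type*} [DecidableEq ι] {G : ι → Type*} [∀ i, Group (G i)] [∀ i, DecidableEq (G i)]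

/-- formal inverse of a letter -/
def linv : (Σ i, G i) → (Σ i, G i) := fun x => ⟨x.1, x.2⁻¹⟩

lemma linv_invol : Function.Involutive (linv (G := G)) := fun x => by obtain ⟨i, g⟩ := x; simp [linv]; exact inv_inv g

lemma equiv_def (x : CoprodI G) : Word.equiv x = x • Word.empty := rfl

lemma fstIdx_eq_some {w : Word G} {j : ι} {a : G j} {l} (h : w.toList = ⟨j, a⟩ :: l) :
    Word.fstIdx w = some j := by simp [Word.fstIdx, h]

lemma fstIdx_eq_none {w : Word G} (h : w.toList = []) : Word.fstIdx w = none := by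
  simp [Word.fstIdx, h]

lemma smul_toList_of_ne {i : ι} (m : G i) (hm : m ≠ 1) (w : Word G)
    (hw : Word.fstIdx w ≠ some i) :
    (CoprodI.of m • w).toList = ⟨i, m⟩ :: w.toList := by
  rw [Word.of_smul_def, Word.equivPair_eq_of_fstIdx_ne hw]
  simp [Word.rcons, hm]

lemma equivPair_of_toList {i : ι} {w : Word G} {a : G i} {l}
    (hw : w.toList = ⟨i, a⟩ :: l) :
    ∃ (t : Word G) (ht : Word.fstIdx t ≠ some i),
      t.toList = l ∧ Word.equivPair i w = ⟨a, t, ht⟩ := by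
  have ha : a ≠ 1 := w.ne_one _ (by rw [hw]; exact List.mem_cons_self)
  have hchain := w.chain_ne
  rw [hw] at hchain
  refine ⟨⟨l, fun x hx => w.ne_one x (by rw [hw]; exact List.mem_cons_of_mem _ hx),
    hchain.tail⟩, ?_, rfl, ?_⟩
  · rw [Word.fstIdx_ne_iff]
    intro x hx
    cases l with
    | nil => simp at hx
    | cons y l' =>
      simp only [List.head?_cons, Option.mem_def, Option.some.injEq] at hx
      subst hx
      exact (List.isChain_cons_cons.mp hchain).1
  · apply (Word.equivPair i).apply_eq_iff_eq_symm_apply.mpr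
    rw [Word.equivPair_symm, Word.rcons, dif_neg ha]
    exact (Word.ext (by simp [Word.cons, hw])).symm

lemma smul_toList_merge {i : ι} (m : G i) {w : Word G} {a : G i} {l}
    (hw : w.toList = ⟨i, a⟩ :: l) (hma : m * a ≠ 1) :
    (CoprodI.of m • w).toList = ⟨i, m * a⟩ :: l := by
  obtain ⟨t, ht, htl, hep⟩ := equivPair_of_toList hw
  rw [Word.of_smul_def, hep]
  simp [Word.rcons, hma, htl]

lemma smul_toList_cancel {i : ι} (m : G i) {w : Word G} {a : G i} {l}
    (hw : w.toList = ⟨i, a⟩ :: l) (hma : m * a = 1) :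
    (CoprodI.of m • w).toList = l := by
  obtain ⟨t, ht, htl, hep⟩ := equivPair_of_toList hw
  rw [Word.of_smul_def, hep]
  simp [Word.rcons, hma, htl]

lemma ne_idx_of_append {w : Word G} {l₁ : List (Σ i, G i)} {x y : Σ i, G i} {l₂}
    (h : w.toList = l₁ ++ x :: y :: l₂) : x.1 ≠ y.1 := by
  have hc := w.chain_ne
  rw [h] at hc
  exact (List.isChain_cons_cons.mp ((List.isChain_append.mp hc).2.1)).1


variable {i₀ : ι}

def fm (b : G i₀) (x : Σ i, G i) : ℤ :=
  (if x = ⟨i₀, b⟩ then 1 else 0) - (if x = ⟨i₀, b⁻¹⟩ then 1 else 0)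

def cnt (b : G i₀) (l : List (Σ i, G i)) : ℤ :=
  (l.count ⟨i₀, b⟩ : ℤ) - (l.count ⟨i₀, b⁻¹⟩ : ℤ)

lemma cnt_nil (b : G i₀) : cnt b ([] : List (Σ i, G i)) = 0 := by simp [cnt]

lemma cnt_cons (b : G i₀) (x) (l : List (Σ i, G i)) :
    cnt b (x :: l) = fm b x + cnt b l := by
  by_cases h1 : x = ⟨i₀, b⟩ <;> by_cases h2 : x = ⟨i₀, b⁻¹⟩ <;>
    simp [cnt, fm, List.count_cons, h1, h2] <;> push_cast <;> ring

lemma cnt_append (b : G i₀) (l₁ l₂ : List (Σ i, G i)) :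
    cnt b (l₁ ++ l₂) = cnt b l₁ + cnt b l₂ := by
  simp only [cnt, List.count_append]
  push_cast
  ring

lemma abs_fm_le (b : G i₀) (x : Σ i, G i) : |fm b x| ≤ 1 := by
  simp only [fm]
  split_ifs <;> norm_num

lemma fm_linv (b : G i₀) (x : Σ i, G i) : fm b (linv x) = - fm b x := by
  have h1 : linv x = ⟨i₀, b⟩ ↔ x = ⟨i₀, b⁻¹⟩ := by
    rw [linv_invol.eq_iff (y := (⟨i₀, b⟩ : Σ i, G i))]
    simp [linv]
  have h2 : linv x = ⟨i₀, b⁻¹⟩ ↔ x = ⟨i₀, b⟩ := by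
    rw [linv_invol.eq_iff (y := (⟨i₀, b⁻¹⟩ : Σ i, G i))]
    simp [linv]
  simp only [fm, h1, h2]
  ring

lemma cnt_revinv (b : G i₀) (s : List (Σ i, G i)) :
    cnt b ((s.map linv).reverse) = - cnt b s := by
  induction s with
  | nil => simp [cnt]
  | cons x s ih =>
    have : ((x :: s).map linv).reverse = (s.map linv).reverse ++ [linv x] := by simp
    rw [this, cnt_append, ih, cnt_cons, cnt_cons, cnt_nil, fm_linv]
    ring

lemma key (x : CoprodI G) : ∀ u : Word G,
    (∃ (p s q : List (Σ i, G i)),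
      (Word.equiv x).toList = p ++ s ∧
      u.toList = (s.map linv).reverse ++ q ∧
      (x • u).toList = p ++ q)
    ∨ (∃ (p s q : List (Σ i, G i)) (j : ι) (g h : G j),
      g * h ≠ 1 ∧
      (Word.equiv x).toList = p ++ ⟨j, g⟩ :: s ∧
      u.toList = (s.map linv).reverse ++ ⟨j, h⟩ :: q ∧
      (x • u).toList = p ++ ⟨j, g * h⟩ :: q) := by
  induction x using CoprodI.induction_left with
  | one =>
    intro u
    left
    exact ⟨[], [], u.toList, by simp [equiv_def], by simp, by simp⟩
  | @mul i m x' ih =>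
    intro u
    by_cases hm : m = 1
    · subst hm
      simpa [map_one] using ih u
    have e1 : Word.equiv (CoprodI.of m * x') = CoprodI.of m • Word.equiv x' := by
      rw [equiv_def, equiv_def, mul_smul]
    have e2 : (CoprodI.of m * x') • u = CoprodI.of m • (x' • u) := mul_smul _ _ _
    rw [e1, e2]
    rcases ih u with ⟨p, s, q, hx, hu, hxu⟩ | ⟨p, s, q, j, g, hval, hgh, hx, hu, hxu⟩
    · -- LEFT case of IH
      rcases p with _ | ⟨⟨k, a⟩, p'⟩
      · -- p = []
        simp only [List.nil_append] at hx hxu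
        by_cases hfq : Word.fstIdx (x' • u) = some i
        · -- head of q has index i
          rcases q with _ | ⟨⟨jq, hv⟩, q'⟩
          · rw [fstIdx_eq_none hxu] at hfq; simp at hfq
          · have hjq : jq = i := by
              rw [fstIdx_eq_some hxu] at hfq; exact Option.some.inj hfq
            subst hjq
            have hne : Word.fstIdx (Word.equiv x') ≠ some jq := by
              cases s with
              | nil => rw [fstIdx_eq_none hx]; simp
              | cons c s' =>
                obtain ⟨k, a⟩ := c
                have hki : k ≠ jq := ne_idx_of_append (w := u)
                  (l₁ := (s'.map linv).reverse) (x := (⟨k, a⁻¹⟩ : Σ i, G i))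
                  (y := ⟨jq, hv⟩) (l₂ := q') (by rw [hu]; simp [linv])
                rw [fstIdx_eq_some hx]; simp [hki]
            have hwx : (CoprodI.of m • Word.equiv x').toList = ⟨jq, m⟩ :: s := by
              rw [smul_toList_of_ne m hm _ hne, hx]
            by_cases hmh : m * hv = 1
            · have hhv : hv = m⁻¹ := (inv_eq_of_mul_eq_one_right hmh).symm
              left
              refine ⟨[], ⟨jq, m⟩ :: s, q', by simpa using hwx, ?_,
                by simpa using smul_toList_cancel m hxu hmh⟩
              rw [hu, hhv]; simp [linv]
            · right
              refine ⟨[], s, q', jq, m, hv, hmh, by simpa using hwx, hu,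
                by simpa using smul_toList_merge m hxu hmh⟩
        · -- head of q does not have index i (or q empty)
          have hres : (CoprodI.of m • (x' • u)).toList = ⟨i, m⟩ :: q := by
            rw [smul_toList_of_ne m hm _ hfq, hxu]
          rcases s with _ | ⟨⟨k, a⟩, s'⟩
          · left
            refine ⟨[⟨i, m⟩], [], q, ?_, by simpa using hu, by simpa using hres⟩
            rw [smul_toList_of_ne m hm _ (by rw [fstIdx_eq_none hx]; simp), hx]
            simp
          · by_cases hk : k = i
            · subst hk
              by_cases hma : m * a = 1
              · left
                refine ⟨[], s', ⟨k, a⁻¹⟩ :: q, by simpa using smul_toList_cancel m hx hma,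
                  ?_, ?_⟩
                · rw [hu]; simp [linv]
                · have hma' : m = a⁻¹ := eq_inv_of_mul_eq_one_left hma
                  rw [hres, hma']; rfl
              · right
                refine ⟨[], s', q, k, m * a, a⁻¹,
                  by rw [mul_inv_cancel_right]; exact hm,
                  by simpa using smul_toList_merge m hx hma, ?_, ?_⟩
                · rw [hu]; simp [linv]
                · rw [hres, mul_inv_cancel_right]; rfl
            · left
              refine ⟨[⟨i, m⟩], ⟨k, a⟩ :: s', q, ?_, hu, by simpa using hres⟩
              rw [smul_toList_of_ne m hm _ (by rw [fstIdx_eq_some hx]; simp [hk]), hx]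
              rfl
      · -- p = ⟨k,a⟩ :: p'
        simp only [List.cons_append] at hx hxu
        by_cases hk : k = i
        · subst hk
          by_cases hma : m * a = 1
          · left
            exact ⟨p', s, q, smul_toList_cancel m hx hma, hu, smul_toList_cancel m hxu hma⟩
          · left
            refine ⟨⟨k, m * a⟩ :: p', s, q, ?_, hu, ?_⟩
            · rw [smul_toList_merge m hx hma]; rfl
            · rw [smul_toList_merge m hxu hma]; rfl
        · left
          refine ⟨⟨i, m⟩ :: ⟨k, a⟩ :: p', s, q, ?_, hu, ?_⟩
          · rw [smul_toList_of_ne m hm _ (by rw [fstIdx_eq_some hx]; simp [hk]), hx]; rfl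
          · rw [smul_toList_of_ne m hm _ (by rw [fstIdx_eq_some hxu]; simp [hk]), hxu]; rfl
    · -- RIGHT case of IH
      rcases p with _ | ⟨⟨k, a⟩, p'⟩
      · simp only [List.nil_append] at hx hxu
        by_cases hij : j = i
        · subst hij
          by_cases hmg : m * g = 1
          · have hhv1 : hval ≠ 1 := u.ne_one ⟨j, hval⟩
              (by rw [hu]; exact List.mem_append_right _ List.mem_cons_self)
            have hm2 : m * (g * hval) ≠ 1 := by
              rw [← mul_assoc, hmg, one_mul]; exact hhv1
            have hmid : m * (g * hval) = hval := by rw [← mul_assoc, hmg, one_mul]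
            left
            refine ⟨[], s, ⟨j, hval⟩ :: q, by simpa using smul_toList_cancel m hx hmg, hu, ?_⟩
            rw [smul_toList_merge m hxu hm2, hmid]; rfl
          · by_cases hm2 : m * (g * hval) = 1
            · have hinv : (m * g)⁻¹ = hval :=
                inv_eq_of_mul_eq_one_right (by rw [mul_assoc]; exact hm2)
              left
              refine ⟨[], ⟨j, m * g⟩ :: s, q, by simpa using smul_toList_merge m hx hmg, ?_,
                by simpa using smul_toList_cancel m hxu hm2⟩
              rw [hu, ← hinv]; simp [linv]
            · right
              refine ⟨[], s, q, j, m * g, hval, by rw [mul_assoc]; exact hm2,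
                by simpa using smul_toList_merge m hx hmg, hu, ?_⟩
              rw [smul_toList_merge m hxu hm2, mul_assoc]; rfl
        · right
          refine ⟨[⟨i, m⟩], s, q, j, g, hval, hgh, ?_, hu, ?_⟩
          · rw [smul_toList_of_ne m hm _ (by rw [fstIdx_eq_some hx]; simp [hij]), hx]; rfl
          · rw [smul_toList_of_ne m hm _ (by rw [fstIdx_eq_some hxu]; simp [hij]), hxu]; rfl
      · simp only [List.cons_append] at hx hxu
        by_cases hk : k = i
        · subst hk
          by_cases hma : m * a = 1
          · right
            exact ⟨p', s, q, j, g, hval, hgh, smul_toList_cancel m hx hma, hu,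
              smul_toList_cancel m hxu hma⟩
          · right
            refine ⟨⟨k, m * a⟩ :: p', s, q, j, g, hval, hgh, ?_, hu, ?_⟩
            · rw [smul_toList_merge m hx hma]; rfl
            · rw [smul_toList_merge m hxu hma]; rfl
        · right
          refine ⟨⟨i, m⟩ :: ⟨k, a⟩ :: p', s, q, j, g, hval, hgh, ?_, hu, ?_⟩
          · rw [smul_toList_of_ne m hm _ (by rw [fstIdx_eq_some hx]; simp [hk]), hx]; rfl
          · rw [smul_toList_of_ne m hm _ (by rw [fstIdx_eq_some hxu]; simp [hk]), hxu]; rfl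


lemma main_bound (b : G i₀) (x y : CoprodI G) :
    |cnt b (Word.equiv (x * y)).toList| ≤
      |cnt b (Word.equiv x).toList| + |cnt b (Word.equiv y).toList| + 3 := by
  have e : Word.equiv (x * y) = x • Word.equiv y := by
    rw [equiv_def, equiv_def, mul_smul]
  rcases key x (Word.equiv y) with ⟨p, s, q, hx, hu, hxu⟩ |
    ⟨p, s, q, j, g, h, hgh, hx, hu, hxu⟩
  · have h1 : cnt b (Word.equiv (x * y)).toList = cnt b p + cnt b q := by
      rw [e, hxu, cnt_append]
    have h2 : cnt b (Word.equiv x).toList = cnt b p + cnt b s := by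
      rw [hx, cnt_append]
    have h3 : cnt b (Word.equiv y).toList = -cnt b s + cnt b q := by
      rw [hu, cnt_append, cnt_revinv]
    rw [h1, h2, h3]
    have heq : cnt b p + cnt b q = (cnt b p + cnt b s) + (-cnt b s + cnt b q) := by ring
    rw [heq]
    have := abs_add_le (cnt b p + cnt b s) (-cnt b s + cnt b q)
    linarith
  · have h1 : cnt b (Word.equiv (x * y)).toList =
        cnt b p + fm b ⟨j, g * h⟩ + cnt b q := by
      rw [e, hxu, cnt_append, cnt_cons]; ring
    have h2 : cnt b (Word.equiv x).toList = cnt b p + fm b ⟨j, g⟩ + cnt b s := by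
      rw [hx, cnt_append, cnt_cons]; ring
    have h3 : cnt b (Word.equiv y).toList = -cnt b s + fm b ⟨j, h⟩ + cnt b q := by
      rw [hu, cnt_append, cnt_revinv, cnt_cons]; ring
    rw [h1, h2, h3]
    have f1 := abs_fm_le b ⟨j, g * h⟩
    have f2 := abs_fm_le b (⟨j, g⟩ : Σ i, G i)
    have f3 := abs_fm_le b (⟨j, h⟩ : Σ i, G i)
    set A := cnt b p + fm b ⟨j, g⟩ + cnt b s with hA
    set B := -cnt b s + fm b ⟨j, h⟩ + cnt b q with hB
    have heq : cnt b p + fm b ⟨j, g * h⟩ + cnt b q =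
        A + B + (fm b ⟨j, g * h⟩ - fm b ⟨j, g⟩ - fm b ⟨j, h⟩) := by
      rw [hA, hB]; ring
    rw [heq]
    have habs := abs_add_three A B (fm b ⟨j, g * h⟩ - fm b ⟨j, g⟩ - fm b ⟨j, h⟩)
    have hE : |fm b ⟨j, g * h⟩ - fm b ⟨j, g⟩ - fm b ⟨j, h⟩| ≤ 3 := by
      rw [abs_le] at f1 f2 f3 ⊢
      constructor <;> [linarith; linarith]
    linarith

end RhemAux
end RhemAuxSection

/-- For any `x, y` in the free product, `|w_b(xy)| ≤ |w_b(x)| + |w_b(y)| + 3`. -/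
theorem rhemtulla_mul_bound {G : Bool → Type*} [∀ i, Group (G i)]
    [∀ i, DecidableEq (G i)] (b : G true) (hb : b ^ 2 ≠ 1) (x y : CoprodI G) :
    |rhemtulla b (x * y)| ≤ |rhemtulla b x| + |rhemtulla b y| + 3 :=
  RhemAux.main_bound b x y
end

section
/- Let A*B be the free product of groups A and B, b ∈ B of order > 2, and w_b the Rhemtulla function. Then for any single commutator [x,y] with x, y ∈ A*B, |w_b([x,y])| ≤ 9. -/
open Monoid

namespace RhemAux

open CoprodI CoprodI.Word List

set_option linter.unusedSectionVars false

variable {ι : Type*} [DecidableEq ι] {G : ι → Type*} [∀ i, Group (G i)] [∀ i, DecidableEq (G i)]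

def invRev (l : List (Σ i, G i)) : List (Σ i, G i) :=
  (l.map (fun p => ⟨p.1, p.2⁻¹⟩)).reverse

@[simp] theorem invRev_nil : invRev ([] : List (Σ i, G i)) = [] := rfl

theorem invRev_cons (p : Σ i, G i) (l : List (Σ i, G i)) :
    invRev (p :: l) = invRev l ++ [⟨p.1, p.2⁻¹⟩] := by
  simp [invRev]

theorem smul_toList_of_fstIdx_ne {i : ι} (m : G i) (hm : m ≠ 1) (w : Word G)
    (h : Word.fstIdx w ≠ some i) :
    (of m • w).toList = ⟨i, m⟩ :: w.toList := by
  rw [← cons_eq_smul (h1 := h) (h2 := hm)]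
  rfl

theorem equivPair_cons {i : ι} (c : G i) (t : Word G) (h1 : Word.fstIdx t ≠ some i)
    (hc : c ≠ 1) : Word.equivPair i (Word.cons c t h1 hc) = ⟨c, t, h1⟩ := by
  rw [(Word.equivPair i).apply_eq_iff_eq_symm_apply, equivPair_symm, Word.rcons, dif_neg hc]

theorem smul_cons_toList {i : ι} (m c : G i) (t : Word G) (h1 : Word.fstIdx t ≠ some i)
    (hc : c ≠ 1) :
    (of m • (Word.cons c t h1 hc)).toList =
      if m * c = 1 then t.toList else ⟨i, m * c⟩ :: t.toList := by
  rw [of_smul_def, equivPair_cons]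
  by_cases h : m * c = 1
  · simp [Word.rcons, h]
  · simp [Word.rcons, h, Word.cons]

theorem fstIdx_ne_of_toList {w : Word G} {p : Σ i, G i} {l : List (Σ i, G i)}
    (h : w.toList = p :: l) {i : ι} (hpi : p.1 ≠ i) : Word.fstIdx w ≠ some i := by
  simp [Word.fstIdx, h, hpi]

theorem fstIdx_ne_of_toList_nil {w : Word G} (h : w.toList = []) (i : ι) :
    Word.fstIdx w ≠ some i := by
  simp [Word.fstIdx, h]

theorem exists_cons_of_toList (w : Word G) {p : Σ i, G i} {t : List (Σ i, G i)}
    (h : w.toList = p :: t) :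
    ∃ (tw : Word G) (h1 : Word.fstIdx tw ≠ some p.1) (hp : p.2 ≠ 1),
      tw.toList = t ∧ w = Word.cons p.2 tw h1 hp := by
  have hc := w.chain_ne
  rw [h, List.isChain_cons] at hc
  refine ⟨⟨t, fun l hl => w.ne_one l (h ▸ List.mem_cons_of_mem _ hl), hc.2⟩,
    ?_, w.ne_one p (h ▸ List.mem_cons_self), rfl, ?_⟩
  · rw [Word.fstIdx_ne_iff]
    intro l hl
    exact hc.1 l hl
  · apply Word.ext
    simp [Word.cons, h]

theorem prod_smul_structure (u v : Word G) :
    (∃ u₁ s v₂, u.toList = u₁ ++ s ∧ v.toList = invRev s ++ v₂ ∧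
      (u.prod • v).toList = u₁ ++ v₂)
    ∨ (∃ (u₁ : List (Σ i, G i)) (s : List (Σ i, G i)) (v₂ : List (Σ i, G i))
        (i : ι) (a c : G i),
      u.toList = u₁ ++ ⟨i, a⟩ :: s ∧ v.toList = invRev s ++ ⟨i, c⟩ :: v₂ ∧
      (u.prod • v).toList = u₁ ++ ⟨i, a * c⟩ :: v₂) := by
  induction u using Word.consRecOn with
  | empty =>
    left
    exact ⟨[], [], v.toList, by simp, by simp, by simp⟩
  | cons i m w h1 h2 ih =>
    have hmul : ((Word.cons m w h1 h2).prod • v) = of m • (w.prod • v) := by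
      rw [Word.prod_cons, mul_smul]
    rcases ih with ⟨u₁, s, v₂, hu, hv, hr⟩ | ⟨u₁, s, v₂, k, a, c, hu, hv, hr⟩
    · rcases u₁ with _ | ⟨p, u₁⟩
      · -- u₁ = [], w.toList = s, (w.prod • v).toList = v₂
        simp only [List.nil_append] at hu hr
        rcases hv2 : v₂ with _ | ⟨⟨j, c⟩, t⟩
        · subst hv2
          left
          refine ⟨[⟨i, m⟩], s, [], by simp [hu], hv, ?_⟩
          rw [hmul, smul_toList_of_fstIdx_ne m h2 _ (fstIdx_ne_of_toList_nil hr i), hr]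
          rfl
        · subst hv2
          by_cases hji : j = i
          · subst hji
            obtain ⟨tw, htw1, hc, htl, hw_eq⟩ := exists_cons_of_toList _ hr
            by_cases hmc : m * c = 1
            · left
              refine ⟨[], ⟨j, m⟩ :: s, t, by simp [hu], ?_, ?_⟩
              · have : c = m⁻¹ := by
                  rw [← inv_eq_iff_mul_eq_one] at hmc
                  exact hmc.symm
                rw [invRev_cons, hv, this]
                simp
              · rw [hmul, hw_eq, smul_cons_toList, if_pos hmc, htl, List.nil_append]
            · right
              refine ⟨[], s, t, j, m, c, by simp [hu], hv, ?_⟩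
              rw [hmul, hw_eq, smul_cons_toList, if_neg hmc, htl, List.nil_append]
          · left
            refine ⟨[⟨i, m⟩], s, ⟨j, c⟩ :: t, by simp [hu], hv, ?_⟩
            rw [hmul, smul_toList_of_fstIdx_ne m h2 _ (fstIdx_ne_of_toList hr hji), hr]
            rfl
      · -- u₁ = p :: u₁
        have hpi : p.1 ≠ i := by
          intro hh
          exact h1 (by simp [Word.fstIdx, hu, hh])
        left
        refine ⟨⟨i, m⟩ :: p :: u₁, s, v₂, by simp [hu], hv, ?_⟩
        rw [hmul, smul_toList_of_fstIdx_ne m h2 _ (fstIdx_ne_of_toList hr hpi), hr]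
        rfl
    · rcases u₁ with _ | ⟨p, u₁⟩
      · simp only [List.nil_append] at hu hr
        have hki : k ≠ i := by
          intro hh
          exact h1 (by simp [Word.fstIdx, hu, hh])
        right
        refine ⟨[⟨i, m⟩], s, v₂, k, a, c, by simp [hu], hv, ?_⟩
        rw [hmul, smul_toList_of_fstIdx_ne m h2 _ (fstIdx_ne_of_toList hr hki), hr]
        rfl
      · have hpi : p.1 ≠ i := by
          intro hh
          exact h1 (by simp [Word.fstIdx, hu, hh])
        right
        refine ⟨⟨i, m⟩ :: p :: u₁, s, v₂, k, a, c, by simp [hu], hv, ?_⟩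
        rw [hmul, smul_toList_of_fstIdx_ne m h2 _ (fstIdx_ne_of_toList hr hpi), hr]
        rfl

section Weight

variable (dl : (Σ i, G i) → ℤ)

def wsum (l : List (Σ i, G i)) : ℤ := (l.map dl).sum

@[simp] theorem wsum_nil : wsum dl ([] : List (Σ i, G i)) = 0 := rfl

@[simp] theorem wsum_cons (p : Σ i, G i) (l : List (Σ i, G i)) :
    wsum dl (p :: l) = dl p + wsum dl l := by simp [wsum]

@[simp] theorem wsum_append (l₁ l₂ : List (Σ i, G i)) :
    wsum dl (l₁ ++ l₂) = wsum dl l₁ + wsum dl l₂ := by simp [wsum]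

theorem wsum_invRev (hinv : ∀ (i : ι) (g : G i), dl ⟨i, g⁻¹⟩ = -dl ⟨i, g⟩)
    (l : List (Σ i, G i)) : wsum dl (invRev l) = - wsum dl l := by
  induction l with
  | nil => simp
  | cons p l ih => rw [invRev_cons]; simp [ih, hinv p.1 p.2]

theorem abs_wsum_smul_sub (hinv : ∀ (i : ι) (g : G i), dl ⟨i, g⁻¹⟩ = -dl ⟨i, g⟩)
    (h1 : ∀ p, |dl p| ≤ 1) (u v : Word G) :
    |wsum dl (u.prod • v).toList - wsum dl u.toList - wsum dl v.toList| ≤ 3 := by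
  rcases prod_smul_structure u v with
    ⟨u₁, s, v₂, hu, hv, hr⟩ | ⟨u₁, s, v₂, i, a, c, hu, hv, hr⟩
  · rw [hu, hv, hr]
    simp only [wsum_append, wsum_invRev dl hinv]
    have : wsum dl u₁ + wsum dl v₂ - (wsum dl u₁ + wsum dl s) - (-wsum dl s + wsum dl v₂) = 0 := by
      ring
    rw [this]
    norm_num
  · rw [hu, hv, hr]
    simp only [wsum_append, wsum_cons, wsum_invRev dl hinv]
    have e1 := h1 ⟨i, a * c⟩
    have e2 := h1 ⟨i, a⟩
    have e3 := h1 ⟨i, c⟩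
    rw [abs_le] at *
    constructor <;> linarith

theorem phi_mul (hinv : ∀ (i : ι) (g : G i), dl ⟨i, g⁻¹⟩ = -dl ⟨i, g⟩)
    (h1 : ∀ p, |dl p| ≤ 1) (x y : CoprodI G) :
    |wsum dl (Word.equiv (x * y)).toList - wsum dl (Word.equiv x).toList -
      wsum dl (Word.equiv y).toList| ≤ 3 := by
  have hprod : (Word.equiv x).prod = x := by
    rw [show Word.equiv x = x • Word.empty from rfl, Word.prod_smul, Word.prod_empty, mul_one]
  have heq : Word.equiv (x * y) = (Word.equiv x).prod • Word.equiv y := by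
    rw [hprod, show Word.equiv y = y • Word.empty from rfl,
      show Word.equiv (x * y) = (x * y) • Word.empty from rfl, mul_smul]
  rw [heq]
  exact abs_wsum_smul_sub dl hinv h1 _ _

theorem phi_inv (hinv : ∀ (i : ι) (g : G i), dl ⟨i, g⁻¹⟩ = -dl ⟨i, g⟩) (x : CoprodI G) :
    wsum dl (Word.equiv x⁻¹).toList = - wsum dl (Word.equiv x).toList := by
  have hprod : (Word.equiv x).prod = x := by
    rw [show Word.equiv x = x • Word.empty from rfl, Word.prod_smul, Word.prod_empty, mul_one]
  have hempty : ((Word.equiv x).prod • Word.equiv x⁻¹).toList = [] := by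
    rw [hprod, show Word.equiv x⁻¹ = x⁻¹ • Word.empty from rfl, ← mul_smul,
      mul_inv_cancel, one_smul]
    rfl
  rcases prod_smul_structure (Word.equiv x) (Word.equiv x⁻¹) with
    ⟨u₁, s, v₂, hu, hv, hr⟩ | ⟨u₁, s, v₂, i, a, c, hu, hv, hr⟩
  · rw [hempty] at hr
    rcases List.append_eq_nil_iff.mp hr.symm with ⟨rfl, rfl⟩
    rw [hu, hv, List.nil_append, List.append_nil, wsum_invRev dl hinv]
  · rw [hempty] at hr
    exact absurd hr.symm (by simp)

end Weight

section BoolCase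

variable {H : Bool → Type*} [∀ i, Group (H i)] [∀ i, DecidableEq (H i)] (b : H true)

/-- The weight of a single letter. -/
def db : (Σ i, H i) → ℤ := fun p =>
  (if p = ⟨true, b⟩ then 1 else 0) - (if p = ⟨true, b⁻¹⟩ then 1 else 0)

theorem db_inv : ∀ (i : Bool) (g : H i), db b ⟨i, g⁻¹⟩ = -db b ⟨i, g⟩ := by
  intro i g
  have h1 : ((⟨i, g⁻¹⟩ : Σ j, H j) = ⟨true, b⟩) ↔ ((⟨i, g⟩ : Σ j, H j) = ⟨true, b⁻¹⟩) := by
    cases i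
    · simp
    · simp only [Sigma.ext_iff, heq_eq_eq, true_and]
      exact inv_eq_iff_eq_inv
  have h2 : ((⟨i, g⁻¹⟩ : Σ j, H j) = ⟨true, b⁻¹⟩) ↔ ((⟨i, g⟩ : Σ j, H j) = ⟨true, b⟩) := by
    cases i
    · simp
    · simp only [Sigma.ext_iff, heq_eq_eq, true_and]
      exact inv_inj
  simp only [db, h1, h2]
  ring

theorem db_abs (p : Σ i, H i) : |db b p| ≤ 1 := by
  unfold db
  split_ifs <;> simp

theorem wsum_db (l : List (Σ i, H i)) :
    wsum (db b) l = ((l.count ⟨true, b⟩ : ℤ)) - (l.count ⟨true, b⁻¹⟩ : ℤ) := by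
  induction l with
  | nil => simp
  | cons p l ih =>
    rw [wsum_cons, ih, List.count_cons, List.count_cons]
    simp only [db, beq_iff_eq]
    push_cast
    split_ifs <;> ring

end BoolCase

end RhemAux


/-- For any single commutator `[x,y]` in the free product, `|w_b([x,y])| ≤ 9`. -/
theorem rhemtulla_comm_bound {G : Bool → Type*} [∀ i, Group (G i)]
    [∀ i, DecidableEq (G i)] (b : G true) (hb : b ^ 2 ≠ 1) (x y : CoprodI G) :
    |rhemtulla b (x⁻¹ * y⁻¹ * x * y)| ≤ 9 := by
  have key : ∀ z : CoprodI G, rhemtulla b z =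
      RhemAux.wsum (RhemAux.db b) (CoprodI.Word.equiv z).toList := by
    intro z
    simp only [rhemtulla, RhemAux.wsum_db]
  have hinv := RhemAux.db_inv b
  have habs := RhemAux.db_abs b
  have h1 := RhemAux.phi_mul (RhemAux.db b) hinv habs x⁻¹ (y⁻¹ * (x * y))
  have h2 := RhemAux.phi_mul (RhemAux.db b) hinv habs y⁻¹ (x * y)
  have h3 := RhemAux.phi_mul (RhemAux.db b) hinv habs x y
  have h4 := RhemAux.phi_inv (RhemAux.db b) hinv x
  have h5 := RhemAux.phi_inv (RhemAux.db b) hinv y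
  have hassoc : x⁻¹ * y⁻¹ * x * y = x⁻¹ * (y⁻¹ * (x * y)) := by group
  rw [hassoc, key]
  rw [abs_le] at h1 h2 h3 ⊢
  constructor <;> linarith [h4, h5, h1.1, h1.2, h2.1, h2.2, h3.1, h3.2]
end
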